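/- arXiv:2105.01309 — 7 statements merged into one kernel-verified Lean document; each statement's English description precedes it below -/
import Mathlib

section
/- If $x, y \in \mathbb{R}^2$ are distinct points, $z \in S^1$ gives the infimum $\inf_{z \in S^1}(|x-z|+|z-y|)$, and both $x,y$ lie in the open unit disk $\mathbb{B}^2$, then the line through $0$ and $z$ bisects the angle $\angle xzy$. -/
open Real Set

open RealInnerProductSpace

lemma aux_norm_deriv {f : ℝ → ℂ} {f' : ℂ} {t : ℝ} (hf : HasDerivAt f f' t) (h0 : f t ≠ 0) :
    HasDerivAt (fun s => ‖f s‖) (⟪f t, f'⟫ / ‖f t‖) t := by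
  have hn : ‖f t‖ ≠ 0 := norm_ne_zero_iff.mpr h0
  have h1 := hf.norm_sq
  have h2 : (‖f t‖ ^ 2 : ℝ) ≠ 0 := pow_ne_zero _ hn
  have h3 := (Real.hasDerivAt_sqrt h2).comp t h1
  have h4 : ((fun x => √x) ∘ fun x => ‖f x‖ ^ 2) = fun s => ‖f s‖ := by
    funext s; exact Real.sqrt_sq (norm_nonneg _)
  rw [h4] at h3
  refine h3.congr_deriv ?_
  rw [Real.sqrt_sq (norm_nonneg _)]
  field_simp

lemma aux_key (a b P Q P' Q' : ℝ) (ha : 0 < a) (hb : 0 < b) (hP : 0 < P) (hQ : 0 < Q)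
    (h1 : P^2 + P'^2 = a^2) (h2 : Q^2 + Q'^2 = b^2) (hE : P'/a + Q'/b = 0) :
    P/a = Q/b := by
  have hE' : P'*b = -(Q'*a) := by
    field_simp at hE; linarith
  have h5 : P'^2*b^2 = Q'^2*a^2 := by
    have := congrArg (fun r => r^2) hE'
    simpa [mul_pow, neg_pow] using this
  have h3 : P^2*b^2 = Q^2*a^2 := by linear_combination b^2*h1 - a^2*h2 - h5
  have h4 : P*b = Q*a := by nlinarith [mul_pos hP hb, mul_pos hQ ha, sq_nonneg (P*b - Q*a)]
  field_simp
  linarith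

/-- If `x, y` are distinct points of the open unit disk and `z ∈ S¹` minimizes
`|x-z|+|z-y|` over the unit circle, then the line through `0` and `z` bisects the
angle `∠xzy`; that is, the angle at `z` between `x` and `0` equals the angle at `z`
between `y` and `0`. -/
theorem stmt0 (x y z : ℂ) (hx : ‖x‖ < 1) (hy : ‖y‖ < 1)
    (hxy : x ≠ y) (hz : ‖z‖ = 1)
    (hmin : ∀ w : ℂ, ‖w‖ = 1 →
      ‖x - z‖ + ‖z - y‖ ≤ ‖x - w‖ + ‖w - y‖) :
    EuclideanGeometry.angle x z 0 = EuclideanGeometry.angle y z 0 := by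
  have hxz : x - z ≠ 0 := by
    intro h
    rw [sub_eq_zero] at h
    rw [h, hz] at hx; exact lt_irrefl 1 hx
  have hzy : z - y ≠ 0 := by
    intro h
    rw [sub_eq_zero] at h
    rw [← h, hz] at hy; exact lt_irrefl 1 hy
  -- derivative of the curve
  have hγ : HasDerivAt (fun t : ℝ => z * Complex.exp (t * Complex.I)) (z * Complex.I) 0 := by
    have h1 : HasDerivAt (fun t : ℝ => (t : ℂ) * Complex.I) Complex.I 0 := by
      simpa using (Complex.ofRealCLM.hasDerivAt (x := (0:ℝ))).mul_const Complex.I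
    simpa using h1.cexp.const_mul z
  have hγ0 : (fun t : ℝ => z * Complex.exp (t * Complex.I)) 0 = z := by simp
  -- the two distance functions
  have hd1 : HasDerivAt (fun t : ℝ => ‖x - z * Complex.exp (t * Complex.I)‖)
      (⟪x - z, -(z * Complex.I)⟫ / ‖x - z‖) 0 := by
    have := aux_norm_deriv ((hasDerivAt_const (0:ℝ) x).sub hγ) (by simpa [hγ0, sub_eq_zero] using hxz)
    simpa using this
  have hd2 : HasDerivAt (fun t : ℝ => ‖z * Complex.exp (t * Complex.I) - y‖)
      (⟪z - y, z * Complex.I⟫ / ‖z - y‖) 0 := by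
    have := aux_norm_deriv (hγ.sub_const y) (by simpa [hγ0, sub_eq_zero] using hzy)
    simpa using this
  -- local minimum
  have hloc : IsLocalMin (fun t : ℝ => ‖x - z * Complex.exp (t * Complex.I)‖ +
      ‖z * Complex.exp (t * Complex.I) - y‖) 0 := by
    apply Filter.Eventually.of_forall
    intro t
    have habs : ‖z * Complex.exp (t * Complex.I)‖ = 1 := by
      rw [norm_mul, hz, Complex.norm_exp_ofReal_mul_I, one_mul]
    simpa using hmin (z * Complex.exp (t * Complex.I)) habs
  have hE : ⟪x - z, -(z * Complex.I)⟫ / ‖x - z‖ + ⟪z - y, z * Complex.I⟫ / ‖z - y‖ = 0 :=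
    hloc.hasDerivAt_eq_zero (hd1.add hd2)
  -- pass to coordinates
  have hinner : ∀ u v : ℂ, ⟪u, v⟫ = u.re*v.re + u.im*v.im := fun u v => by
    simp [Complex.inner, Complex.mul_re]; ring
  have hyz : y - z ≠ 0 := sub_ne_zero.mpr fun h => hzy (by rw [h]; simp)
  have ha : 0 < ‖x - z‖ := norm_pos_iff.mpr hxz
  have hb : 0 < ‖y - z‖ := norm_pos_iff.mpr hyz
  have hz2 : z.re^2 + z.im^2 = 1 := by
    have h := Complex.sq_norm z
    rw [hz] at h
    simp [Complex.normSq_apply] at h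
    linear_combination -h
  have hx2 : x.re^2 + x.im^2 < 1 := by
    have h := Complex.sq_norm x
    nlinarith [Complex.normSq_apply x, norm_nonneg x]
  have hy2 : y.re^2 + y.im^2 < 1 := by
    have h := Complex.sq_norm y
    nlinarith [Complex.normSq_apply y, norm_nonneg y]
  have ha2 : ‖x - z‖^2 = (z.re-x.re)^2 + (z.im-x.im)^2 := by
    rw [Complex.sq_norm, Complex.normSq_apply]
    simp [Complex.sub_re, Complex.sub_im]
    ring
  have hb2 : ‖y - z‖^2 = (z.re-y.re)^2 + (z.im-y.im)^2 := by
    rw [Complex.sq_norm, Complex.normSq_apply]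
    simp [Complex.sub_re, Complex.sub_im]
    ring
  set P := (z.re-x.re)*z.re + (z.im-x.im)*z.im with hPdef
  set P' := (z.re-x.re)*(-z.im) + (z.im-x.im)*z.re with hP'def
  set Q := (z.re-y.re)*z.re + (z.im-y.im)*z.im with hQdef
  set Q' := (z.re-y.re)*(-z.im) + (z.im-y.im)*z.re with hQ'def
  have hP : 0 < P := by
    rw [hPdef]
    nlinarith [sq_nonneg (x.re*z.im - x.im*z.re), sq_nonneg (x.re*z.re + x.im*z.im + 1)]
  have hQ : 0 < Q := by
    rw [hQdef]
    nlinarith [sq_nonneg (y.re*z.im - y.im*z.re), sq_nonneg (y.re*z.re + y.im*z.im + 1)]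
  have h1 : P^2 + P'^2 = ‖x - z‖^2 := by
    rw [ha2, hPdef, hP'def]
    linear_combination ((z.re - x.re)^2 + (z.im - x.im)^2) * hz2
  have h2 : Q^2 + Q'^2 = ‖y - z‖^2 := by
    rw [hb2, hQdef, hQ'def]
    linear_combination ((z.re - y.re)^2 + (z.im - y.im)^2) * hz2
  have hE' : P'/‖x - z‖ + Q'/‖y - z‖ = 0 := by
    rw [norm_sub_rev y z]
    convert hE using 2
    · rw [hinner]
      simp [Complex.sub_re, Complex.sub_im, Complex.mul_re, Complex.mul_im]
      ring
    · rw [hinner]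
      simp [Complex.sub_re, Complex.sub_im, Complex.mul_re, Complex.mul_im]
      ring
  have key : P/‖x - z‖ = Q/‖y - z‖ :=
    aux_key _ _ _ _ _ _ ha hb hP hQ h1 h2 hE'
  have hgoal : ⟪x - z, (0:ℂ) - z⟫ / (‖x - z‖ * ‖(0:ℂ) - z‖)
      = ⟪y - z, (0:ℂ) - z⟫ / (‖y - z‖ * ‖(0:ℂ) - z‖) := by
    have hnz : ‖(0:ℂ) - z‖ = 1 := by
      simp [hz]
    rw [hnz, mul_one, mul_one, hinner, hinner]
    convert key using 2
    · simp [Complex.sub_re, Complex.sub_im]; ring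
    · simp [Complex.sub_re, Complex.sub_im]; ring
  unfold EuclideanGeometry.angle
  simp only [vsub_eq_sub]
  unfold InnerProductGeometry.angle
  rw [hgoal]
end

section
/- Let $0<r<1$ and let $x,y$ lie in the annular ring $R(r,1)=\{z\in\mathbb{C}: r<|z|<1\}$ with $[x,y]\cap \overline{B}^2(0,r)=\varnothing$. If $z\in\partial R(r,1)$ gives the infimum $\inf_{z\in\partial R(r,1)}(|x-z|+|z-y|)$, then $z$ satisfies the quartic equation $\overline{x}\overline{y}z^4 - j^2(\overline{x}+\overline{y})z^3 + j^4(x+y)z - j^4 xy = 0$ with either $j=r$ or $j=1$. -/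
open Real Set

/-- The annular ring `R(r,1) = {z : r < |z| < 1}`. -/
def annulus (r : ℝ) : Set ℂ := {z : ℂ | r < ‖z‖ ∧ ‖z‖ < 1}

/-- The triangular ratio metric `s_G`. -/
noncomputable def sMetric (G : Set ℂ) (x y : ℂ) : ℝ :=
  ‖x - y‖ /
    sInf ((fun z => ‖x - z‖ + ‖z - y‖) '' frontier G)

/-- The `j*`-metric. -/
noncomputable def jStar (G : Set ℂ) (x y : ℂ) : ℝ :=
  ‖x - y‖ /
    (‖x - y‖ +
      2 * min (Metric.infDist x (frontier G)) (Metric.infDist y (frontier G)))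

/-- The (absolute) cross-ratio `|a,x,b,y|`. -/
noncomputable def crossRatio (a x b y : ℂ) : ℝ :=
  (‖a - b‖ * ‖x - y‖) / (‖a - x‖ * ‖b - y‖)

/-- The Möbius (Seittenranta) metric `δ_G`. -/
noncomputable def deltaMetric (G : Set ℂ) (x y : ℂ) : ℝ :=
  sSup ((fun p : ℂ × ℂ => Real.log (1 + crossRatio p.1 x p.2 y)) '' (frontier G ×ˢ frontier G))

/-- Derivative of the pointwise absolute value of a complex-valued function. -/
lemma hasDerivAt_cabs {f : ℝ → ℂ} {f' : ℂ} {t : ℝ} (hf : HasDerivAt f f' t) (h0 : f t ≠ 0) :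
    HasDerivAt (fun s => ‖f s‖)
      ((((starRingEnd ℂ) (f t)) * f').re / ‖f t‖) t := by
  have h1 : HasDerivAt (fun s => ‖f s‖ ^ 2) (2 * (inner ℝ (f t) f' : ℝ)) t := hf.norm_sq
  have hne : ‖f t‖ ^ 2 ≠ 0 := by simpa using h0
  have h2 := (Real.hasDerivAt_sqrt hne).comp t h1
  have hfun : (fun s => Real.sqrt (‖f s‖ ^ 2)) = fun s => ‖f s‖ := by
    funext s
    rw [Real.sqrt_sq (norm_nonneg _)]
  rw [show ((fun x => Real.sqrt x) ∘ fun s => ‖f s‖ ^ 2) = fun s => Real.sqrt (‖f s‖ ^ 2) from rfl,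
    hfun] at h2
  refine h2.congr_deriv ?_
  rw [Complex.inner, Real.sqrt_sq (norm_nonneg _)]
  have : ‖f t‖ = ‖f t‖ := rfl
  rw [this]
  field_simp

/-- Algebraic dichotomy coming from the reflection condition. -/
lemma alg_dichotomy (A B : ℂ) (hA : A ≠ 0) (hB : B ≠ 0)
    (hs : A.im * ‖B‖ + B.im * ‖A‖ = 0) :
    (A * B).im = 0 ∨ A * (starRingEnd ℂ) B = -(((‖A‖ * ‖B‖ : ℝ)) : ℂ) := by
  set a := ‖A‖ with ha
  set b := ‖B‖ with hb
  have ha0 : 0 < a := norm_pos_iff.2 hA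
  have hb0 : 0 < b := norm_pos_iff.2 hB
  have hA2 : A.re ^ 2 + A.im ^ 2 = a ^ 2 := by
    rw [ha, Complex.sq_norm, Complex.normSq_apply]; ring
  have hB2 : B.re ^ 2 + B.im ^ 2 = b ^ 2 := by
    rw [hb, Complex.sq_norm, Complex.normSq_apply]; ring
  have hfac : (A.re * b - B.re * a) * (A.re * b + B.re * a) = 0 := by
    linear_combination b^2 * hA2 - a^2 * hB2 + (B.im*a - A.im*b) * hs
  rcases mul_eq_zero.1 hfac with h | h
  · left
    have : (A * B).im * (a * b) = 0 := by
      rw [Complex.mul_im]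
      linear_combination (B.im*a) * h + (B.re*a) * hs
    have hab : a * b ≠ 0 := by positivity
    exact (mul_eq_zero.1 this).resolve_right hab
  · right
    apply Complex.ext
    · have : (A.re * B.re + A.im * B.im + a * b) * b ^ 2 = 0 := by
        linear_combination (B.re*b) * h + (B.im*b) * hs - (a*b) * hB2
      have hb2 : (b:ℝ) ^ 2 ≠ 0 := by positivity
      have := (mul_eq_zero.1 this).resolve_right hb2
      simp only [Complex.mul_re, Complex.conj_re, Complex.conj_im, Complex.neg_re,
        Complex.ofReal_re]
      linarith [this]
    · have : (A.im * B.re - A.re * B.im) * b ^ 2 = 0 := by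
        linear_combination (B.re*b) * hs - (B.im*b) * h
      have hb2 : (b:ℝ) ^ 2 ≠ 0 := by positivity
      have := (mul_eq_zero.1 this).resolve_right hb2
      simp only [Complex.mul_im, Complex.conj_re, Complex.conj_im, Complex.neg_im,
        Complex.ofReal_im]
      linarith [this]

/-- If `x,y ∈ R(r,1)` with `[x,y] ∩ closedBall 0 r = ∅` and `z ∈ ∂R(r,1)` minimizes
`|x-z|+|z-y|`, then `z` satisfies the quartic equation
`x̄ȳz⁴ - j²(x̄+ȳ)z³ + j⁴(x+y)z - j⁴xy = 0` with `j = r` or `j = 1`. -/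
theorem stmt1 (r : ℝ) (hr0 : 0 < r) (hr1 : r < 1) (x y z : ℂ)
    (hx : x ∈ annulus r) (hy : y ∈ annulus r)
    (hseg : segment ℝ x y ∩ Metric.closedBall 0 r = ∅)
    (hz : ‖z‖ = r ∨ ‖z‖ = 1)
    (hmin : ∀ w : ℂ, (‖w‖ = r ∨ ‖w‖ = 1) →
      ‖x - z‖ + ‖z - y‖ ≤ ‖x - w‖ + ‖w - y‖) :
    ∃ j : ℝ, (j = r ∨ j = 1) ∧
      (starRingEnd ℂ) x * (starRingEnd ℂ) y * z ^ 4
        - (j : ℂ) ^ 2 * ((starRingEnd ℂ) x + (starRingEnd ℂ) y) * z ^ 3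
        + (j : ℂ) ^ 4 * (x + y) * z - (j : ℂ) ^ 4 * x * y = 0 := by
  simp only [annulus, Set.mem_setOf_eq] at hx hy
  obtain ⟨hxr, hx1⟩ := hx
  obtain ⟨hyr, hy1⟩ := hy
  refine ⟨‖z‖, hz, ?_⟩
  set j : ℝ := ‖z‖ with hjdef
  have hj0 : 0 < j := by rcases hz with h | h <;> rw [h] <;> linarith
  have hz0 : z ≠ 0 := by
    intro h; rw [h] at hjdef; simp at hjdef; rw [hjdef] at hj0; linarith
  have hzx : z ≠ x := by
    intro h; rw [← h, ← hjdef] at hxr hx1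
    rcases hz with h' | h' <;> rw [h'] at hxr hx1 <;> linarith
  have hzy : z ≠ y := by
    intro h; rw [← h, ← hjdef] at hyr hy1
    rcases hz with h' | h' <;> rw [h'] at hyr hy1 <;> linarith
  have hxz' : x - z ≠ 0 := sub_ne_zero.2 (fun h => hzx h.symm)
  have hzy' : z - y ≠ 0 := sub_ne_zero.2 hzy
  have hzx' : z - x ≠ 0 := sub_ne_zero.2 hzx
  -- derivative setup
  have hE : HasDerivAt (fun w : ℂ => Complex.exp (w * Complex.I)) Complex.I (((0:ℝ):ℂ)) := by
    have h1 : HasDerivAt (fun w : ℂ => w * Complex.I) Complex.I (((0:ℝ):ℂ)) := by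
      simpa using (hasDerivAt_id (((0:ℝ):ℂ))).mul_const Complex.I
    have := h1.cexp
    simpa using this
  have hE' : HasDerivAt (fun t : ℝ => Complex.exp (↑t * Complex.I)) Complex.I 0 :=
    hE.comp_ofReal
  have hc1 : HasDerivAt (fun t : ℝ => x - z * Complex.exp (↑t * Complex.I))
      (-(z * Complex.I)) 0 := (hE'.const_mul z).const_sub x
  have hc2 : HasDerivAt (fun t : ℝ => z * Complex.exp (↑t * Complex.I) - y)
      (z * Complex.I) 0 := (hE'.const_mul z).sub_const y
  have hf10 : (x - z * Complex.exp ((↑(0:ℝ)) * Complex.I)) = x - z := by simp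
  have hf20 : (z * Complex.exp ((↑(0:ℝ)) * Complex.I) - y) = z - y := by simp
  have hd1 := hasDerivAt_cabs hc1 (by rw [hf10]; exact hxz')
  have hd2 := hasDerivAt_cabs hc2 (by rw [hf20]; exact hzy')
  rw [hf10] at hd1
  rw [hf20] at hd2
  have hg := hd1.add hd2
  have hlocal : IsLocalMin (fun t : ℝ => ‖x - z * Complex.exp (↑t * Complex.I)‖ +
      ‖z * Complex.exp (↑t * Complex.I) - y‖) 0 := by
    apply Filter.Eventually.of_forall
    intro t
    have habs : ‖z * Complex.exp (↑t * Complex.I)‖ = j := by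
      rw [norm_mul, Complex.norm_exp]
      simp [← hjdef]
    have := hmin (z * Complex.exp (↑t * Complex.I)) (by rw [habs]; exact hz)
    simpa using this
  have hD := hlocal.deriv_eq_zero
  rw [show (fun t : ℝ => ‖x - z * Complex.exp (↑t * Complex.I)‖ + ‖z * Complex.exp (↑t * Complex.I) - y‖) = ((fun s : ℝ => ‖x - z * Complex.exp (↑s * Complex.I)‖) + fun s : ℝ => ‖z * Complex.exp (↑s * Complex.I) - y‖) from rfl, hg.deriv] at hD
  -- reinterpret the derivative condition
  set A : ℂ := (starRingEnd ℂ) z * (z - x) with hAdef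
  set B : ℂ := (starRingEnd ℂ) z * (z - y) with hBdef
  have hA0 : A ≠ 0 := mul_ne_zero (by simpa using hz0) hzx'
  have hB0 : B ≠ 0 := mul_ne_zero (by simpa using hz0) hzy'
  have e1 : ((starRingEnd ℂ) (x - z) * (-(z * Complex.I))).re = A.im := by
    simp only [hAdef, Complex.mul_re, Complex.mul_im, Complex.sub_re, Complex.sub_im,
      Complex.conj_re, Complex.conj_im, Complex.neg_re, Complex.neg_im,
      Complex.I_re, Complex.I_im]
    ring
  have e2 : ((starRingEnd ℂ) (z - y) * (z * Complex.I)).re = B.im := by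
    simp only [hBdef, Complex.mul_re, Complex.mul_im, Complex.sub_re, Complex.sub_im,
      Complex.conj_re, Complex.conj_im, Complex.I_re, Complex.I_im]
    ring
  rw [e1, e2] at hD
  have hc1p : 0 < ‖x - z‖ := norm_pos_iff.2 hxz'
  have hc2p : 0 < ‖z - y‖ := norm_pos_iff.2 hzy'
  have habsA : ‖A‖ = j * ‖x - z‖ := by
    rw [hAdef, norm_mul, Complex.norm_conj, ← hjdef, norm_sub_rev]
  have habsB : ‖B‖ = j * ‖z - y‖ := by
    rw [hBdef, norm_mul, Complex.norm_conj, ← hjdef]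
  have hD' : A.im * ‖z - y‖ + B.im * ‖x - z‖ = 0 := by
    field_simp at hD
    linarith [hD]
  have hs : A.im * ‖B‖ + B.im * ‖A‖ = 0 := by
    rw [habsA, habsB]
    linear_combination j * hD'
  rcases alg_dichotomy A B hA0 hB0 hs with him | hneg
  · -- reflection condition holds: conclude the quartic
    have himm : (starRingEnd ℂ) (A * B) = A * B := Complex.conj_eq_iff_im.2 him
    rw [hAdef, hBdef] at himm
    simp only [map_mul, map_sub, Complex.conj_conj] at himm
    have hzz : z * (starRingEnd ℂ) z = ((j:ℝ):ℂ)^2 := by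
      rw [Complex.mul_conj, ← Complex.sq_norm, ← hjdef]
      push_cast
      ring
    set w := (starRingEnd ℂ) z
    set xc := (starRingEnd ℂ) x
    set yc := (starRingEnd ℂ) y
    have heq : w^2 * ((z - x) * (z - y)) = z^2 * ((w - xc) * (w - yc)) := by
      linear_combination -himm
    linear_combination (-(z^2)) * heq +
      ((z*w + (j:ℂ)^2)*(z^2 - (x+y)*z + x*y) - z^2*(z*w+(j:ℂ)^2) + (xc+yc)*z^3) * hzz
  · -- degenerate case: z lies on the open segment (x, y), contradiction
    exfalso
    have hzz : z * (starRingEnd ℂ) z = ((j:ℝ):ℂ)^2 := by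
      rw [Complex.mul_conj, ← Complex.sq_norm, ← hjdef]
      push_cast
      ring
    set s : ℝ := ‖A‖ * ‖B‖ with hsdef
    have hs0 : 0 < s := by
      have := norm_pos_iff.2 hA0
      have := norm_pos_iff.2 hB0
      positivity
    -- (z-x) * conj(z-y) = -(s/j^2)
    have hkey : (z - x) * (starRingEnd ℂ) (z - y) * ((j:ℝ):ℂ)^2 = -((s:ℝ):ℂ) := by
      rw [hAdef, hBdef] at hneg
      simp only [map_mul, Complex.conj_conj] at hneg
      calc (z - x) * (starRingEnd ℂ) (z - y) * ((j:ℝ):ℂ)^2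
          = ((starRingEnd ℂ) z * (z - x)) * (z * (starRingEnd ℂ) (z - y)) := by
            rw [← hzz]; ring
        _ = -((s:ℝ):ℂ) := by linear_combination hneg
    set n : ℝ := Complex.normSq (z - y) with hndef
    have hn0 : 0 < n := by
      rw [hndef]
      exact Complex.normSq_pos.2 hzy'
    have hmc : (z - y) * (starRingEnd ℂ) (z - y) = ((n:ℝ):ℂ) := Complex.mul_conj _
    set t : ℝ := s / (j^2 * n) with htdef
    have ht0 : 0 < t := by positivity
    have hlin : z - x = -((t:ℝ):ℂ) * (z - y) := by
      have hj2 : ((j:ℝ):ℂ)^2 ≠ 0 :=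
        pow_ne_zero 2 (Complex.ofReal_ne_zero.2 (ne_of_gt hj0))
      have hnne : ((n:ℝ):ℂ) ≠ 0 := by
        simp only [ne_eq, Complex.ofReal_eq_zero]; exact ne_of_gt hn0
      have h1 : (z - x) * ((n:ℝ):ℂ) * ((j:ℝ):ℂ)^2 = -((s:ℝ):ℂ) * (z - y) := by
        calc (z - x) * ((n:ℝ):ℂ) * ((j:ℝ):ℂ)^2
            = ((z - x) * (starRingEnd ℂ) (z - y) * ((j:ℝ):ℂ)^2) * (z - y) := by
              rw [← hmc]; ring
          _ = -((s:ℝ):ℂ) * (z - y) := by rw [hkey]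
      have hts : ((t:ℝ):ℂ) * (((j:ℝ):ℂ)^2 * ((n:ℝ):ℂ)) = ((s:ℝ):ℂ) := by
        have : t * (j^2 * n) = s := by
          rw [htdef]; field_simp
        exact_mod_cast congrArg (Complex.ofReal) this
      have hc : ((n:ℝ):ℂ) * ((j:ℝ):ℂ)^2 ≠ 0 := mul_ne_zero hnne hj2
      have h2 : (z - x) * (((n:ℝ):ℂ) * ((j:ℝ):ℂ)^2)
          = (-((t:ℝ):ℂ) * (z - y)) * (((n:ℝ):ℂ) * ((j:ℝ):ℂ)^2) := by
        linear_combination h1 + (z - y) * hts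
      exact mul_right_cancel₀ hc h2
    -- z lies on the segment
    have hzseg : z ∈ segment ℝ x y := by
      refine ⟨1/(1+t), t/(1+t), by positivity, by positivity, ?_, ?_⟩
      · rw [← add_div, div_self (by positivity : (1:ℝ)+t ≠ 0)]
      · have h1t : (0:ℝ) < 1 + t := by positivity
        have hC : (((1+t:ℝ)):ℂ) ≠ 0 := Complex.ofReal_ne_zero.2 (ne_of_gt h1t)
        have hmain : (((1:ℝ):ℂ) + ((t:ℝ):ℂ)) * z = x + ((t:ℝ):ℂ) * y := by
          linear_combination (norm := (push_cast; ring)) hlin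
        apply mul_left_cancel₀ hC
        rw [Complex.real_smul, Complex.real_smul]
        have e1 : (((1+t:ℝ)):ℂ) * (((1/(1+t):ℝ)):ℂ) = 1 := by
          rw [← Complex.ofReal_mul, show (1+t) * (1/(1+t)) = (1:ℝ) by field_simp]
          exact Complex.ofReal_one
        have e2 : (((1+t:ℝ)):ℂ) * (((t/(1+t):ℝ)):ℂ) = ((t:ℝ):ℂ) := by
          rw [← Complex.ofReal_mul, show (1+t) * (t/(1+t)) = t by field_simp]
        have e3 : (((1+t:ℝ)):ℂ) = ((1:ℝ):ℂ) + ((t:ℝ):ℂ) := Complex.ofReal_add 1 t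
        calc (((1+t:ℝ)):ℂ) * ((((1/(1+t):ℝ)):ℂ) * x + (((t/(1+t):ℝ)):ℂ) * y)
            = ((((1+t:ℝ)):ℂ) * (((1/(1+t):ℝ)):ℂ)) * x
              + ((((1+t:ℝ)):ℂ) * (((t/(1+t):ℝ)):ℂ)) * y := by ring
          _ = x + ((t:ℝ):ℂ) * y := by rw [e1, e2]; ring
          _ = (((1:ℝ):ℂ) + ((t:ℝ):ℂ)) * z := hmain.symm
          _ = (((1+t:ℝ)):ℂ) * z := by rw [e3]
    have hzball : z ∉ Metric.closedBall (0:ℂ) r := by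
      intro hmem
      have : z ∈ segment ℝ x y ∩ Metric.closedBall 0 r := ⟨hzseg, hmem⟩
      rw [hseg] at this
      exact this
    have hzr : r < j := by
      by_contra h
      push_neg at h
      exact hzball (by simpa [Complex.dist_eq, hjdef] using h)
    have hzlt1 : j < 1 := by
      obtain ⟨a, b, ha, hb, hab, hsum⟩ := hzseg
      have hb0' : 0 < b := by
        rcases lt_or_eq_of_le hb with h | h
        · exact h
        · exfalso
          rw [← h] at hsum
          simp at hsum
          have ha1 : a = 1 := by linarith [hab]
          rw [ha1] at hsum
          simp at hsum
          exact hzx (by rw [← hsum])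
      have ha0' : 0 < a := by
        rcases lt_or_eq_of_le ha with h | h
        · exact h
        · exfalso
          rw [← h] at hsum
          simp at hsum
          have hb1 : b = 1 := by linarith [hab]
          rw [hb1] at hsum
          simp at hsum
          exact hzy (by rw [← hsum])
      calc j = ‖z‖ := rfl
        _ = ‖a • x + b • y‖ := by rw [hsum]
        _ ≤ ‖a • x‖ + ‖b • y‖ := norm_add_le _ _
        _ = a * ‖x‖ + b * ‖y‖ := by
            rw [norm_smul, norm_smul, Real.norm_of_nonneg ha, Real.norm_of_nonneg hb]
        _ < a * 1 + b * 1 := by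
            apply add_lt_add
            · exact mul_lt_mul_of_pos_left hx1 ha0'
            · exact mul_lt_mul_of_pos_left hy1 hb0'
        _ = 1 := by linarith [hab]
    rcases hz with h | h
    · rw [h] at hzr; exact lt_irrefl _ hzr
    · rw [h] at hzlt1; exact lt_irrefl _ hzlt1
end

section
/- If $x,y \in R(r,1)$ with $\arg(x)=\arg(y)$, then the triangular ratio metric satisfies $s_{R(r,1)}(x,y) = \frac{|x-y|}{\min\{2-|x+y|,\ |x+y|-2r\}}$. -/
open Real Set

lemma annulus_isOpen (r : ℝ) : IsOpen (annulus r) := by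
  have h : annulus r = (fun z : ℂ => ‖z‖) ⁻¹' (Ioo r 1) := rfl
  rw [h]
  exact isOpen_Ioo.preimage continuous_norm

lemma closure_annulus_subset (r : ℝ) :
    closure (annulus r) ⊆ (fun z : ℂ => ‖z‖) ⁻¹' (Icc r 1) := by
  apply closure_minimal
  · exact fun z hz => ⟨le_of_lt hz.1, le_of_lt hz.2⟩
  · exact isClosed_Icc.preimage continuous_norm

lemma outer_mem_closure (r : ℝ) (hr0 : 0 < r) (hr1 : r < 1) (u : ℂ)
    (hu : ‖u‖ = 1) : u ∈ closure (annulus r) := by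
  rw [Metric.mem_closure_iff]
  intro ε hε
  set t : ℝ := max ((r+1)/2) (1 - ε/2) with ht
  have htr : r < t := lt_of_lt_of_le (by linarith) (le_max_left _ _)
  have ht1 : t < 1 := max_lt (by linarith) (by linarith)
  have ht0 : 0 < t := lt_trans hr0 htr
  refine ⟨(t:ℂ) * u, ⟨?_, ?_⟩, ?_⟩
  · rw [norm_mul, Complex.norm_real, Real.norm_eq_abs, hu, mul_one, abs_of_pos ht0]; exact htr
  · rw [norm_mul, Complex.norm_real, Real.norm_eq_abs, hu, mul_one, abs_of_pos ht0]; exact ht1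
  · have : u - (t:ℂ) * u = ((1 - t : ℝ) : ℂ) * u := by push_cast; ring
    rw [Complex.dist_eq, this, norm_mul, Complex.norm_real, Real.norm_eq_abs, hu, mul_one]
    have h1 : 1 - ε/2 ≤ t := le_max_right _ _
    rw [abs_of_nonneg (by linarith)]
    linarith

lemma inner_mem_closure (r : ℝ) (hr0 : 0 < r) (hr1 : r < 1) (u : ℂ)
    (hu : ‖u‖ = 1) : (r:ℂ) * u ∈ closure (annulus r) := by
  rw [Metric.mem_closure_iff]
  intro ε hε
  set t : ℝ := min ((r+1)/2) (r + ε/2) with ht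
  have htr : r < t := lt_min (by linarith) (by linarith)
  have ht1 : t < 1 := lt_of_le_of_lt (min_le_left _ _) (by linarith)
  have ht0 : 0 < t := lt_trans hr0 htr
  refine ⟨(t:ℂ) * u, ⟨?_, ?_⟩, ?_⟩
  · rw [norm_mul, Complex.norm_real, Real.norm_eq_abs, hu, mul_one, abs_of_pos ht0]; exact htr
  · rw [norm_mul, Complex.norm_real, Real.norm_eq_abs, hu, mul_one, abs_of_pos ht0]; exact ht1
  · have : (r:ℂ) * u - (t:ℂ) * u = ((r - t : ℝ) : ℂ) * u := by push_cast; ring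
    rw [Complex.dist_eq, this, norm_mul, Complex.norm_real, Real.norm_eq_abs, hu, mul_one]
    have h1 : t ≤ r + ε/2 := min_le_right _ _
    rw [abs_of_nonpos (by linarith), neg_sub]
    linarith

lemma sub_abs_le_abs_sub (x z : ℂ) :
    ‖z‖ - ‖x‖ ≤ ‖x - z‖ := by
  calc ‖z‖ - ‖x‖ = ‖z‖ - ‖x‖ := rfl
    _ ≤ ‖z - x‖ := norm_sub_norm_le z x
    _ = ‖x - z‖ := norm_sub_rev z x

lemma abs_sub_le_abs_sub (x z : ℂ) :
    ‖x‖ - ‖z‖ ≤ ‖x - z‖ := by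
  calc ‖x‖ - ‖z‖ = ‖x‖ - ‖z‖ := rfl
    _ ≤ ‖x - z‖ := norm_sub_norm_le x z
    _ = ‖x - z‖ := rfl

/-- For `x,y ∈ R(r,1)` with `arg x = arg y`,
`s_{R(r,1)}(x,y) = |x-y| / min{2-|x+y|, |x+y|-2r}`. -/
theorem stmt3 (r : ℝ) (hr0 : 0 < r) (hr1 : r < 1) (x y : ℂ)
    (hx : x ∈ annulus r) (hy : y ∈ annulus r) (harg : x.arg = y.arg) :
    sMetric (annulus r) x y =
      ‖x - y‖ /
        min (2 - ‖x + y‖) (‖x + y‖ - 2 * r) := by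
  obtain ⟨hxr, hx1⟩ := hx
  obtain ⟨hyr, hy1⟩ := hy
  set a := ‖x‖ with ha'
  set b := ‖y‖ with hb'
  set u : ℂ := Complex.exp (x.arg * Complex.I) with hud
  have hu : ‖u‖ = 1 := Complex.norm_exp_ofReal_mul_I _
  have hxu : x = (a:ℂ) * u := (Complex.norm_mul_exp_arg_mul_I x).symm
  have hyu : y = (b:ℂ) * u := by
    rw [hud, harg]; exact (Complex.norm_mul_exp_arg_mul_I y).symm
  have habs_add : ‖x + y‖ = a + b := by
    have h : x + y = ((a + b : ℝ) : ℂ) * u := by rw [hxu, hyu]; push_cast; ring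
    rw [h, norm_mul, Complex.norm_real, Real.norm_eq_abs, hu, mul_one, abs_of_nonneg (by linarith)]
  -- frontier membership of u and r*u
  have hfu : u ∈ frontier (annulus r) := by
    rw [frontier, (annulus_isOpen r).interior_eq]
    refine ⟨outer_mem_closure r hr0 hr1 u hu, fun h => ?_⟩
    exact absurd h.2 (by rw [hu]; exact lt_irrefl 1)
  have hfru : (r:ℂ) * u ∈ frontier (annulus r) := by
    rw [frontier, (annulus_isOpen r).interior_eq]
    refine ⟨inner_mem_closure r hr0 hr1 u hu, fun h => ?_⟩
    have : ‖(r:ℂ) * u‖ = r := by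
      rw [norm_mul, Complex.norm_real, Real.norm_eq_abs, hu, mul_one, abs_of_pos hr0]
    exact absurd h.1 (by rw [this]; exact lt_irrefl r)
  set f : ℂ → ℝ := fun z => ‖x - z‖ + ‖z - y‖ with hf
  set m : ℝ := min (2 - (a + b)) ((a + b) - 2 * r) with hm
  -- values at u and r*u
  have hvu : f u = 2 - (a + b) := by
    have h1 : x - u = ((a - 1 : ℝ) : ℂ) * u := by rw [hxu]; push_cast; ring
    have h2 : u - y = ((1 - b : ℝ) :
        ℂ) * u := by rw [hyu]; push_cast; ring
    simp only [hf, h1, h2, norm_mul, Complex.norm_real, Real.norm_eq_abs, hu, mul_one]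
    rw [abs_of_nonpos (by linarith), abs_of_nonneg (by linarith)]
    ring
  have hvru : f ((r:ℂ) * u) = (a + b) - 2 * r := by
    have h1 : x - (r:ℂ) * u = ((a - r : ℝ) : ℂ) * u := by rw [hxu]; push_cast; ring
    have h2 : (r:ℂ) * u - y = ((r - b : ℝ) : ℂ) * u := by rw [hyu]; push_cast; ring
    simp only [hf, h1, h2, norm_mul, Complex.norm_real, Real.norm_eq_abs, hu, mul_one]
    rw [abs_of_nonneg (by linarith), abs_of_nonpos (by linarith)]
    ring
  -- lower bound
  have hlow : ∀ z ∈ frontier (annulus r), m ≤ f z := by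
    intro z hz
    have hcl : r ≤ ‖z‖ ∧ ‖z‖ ≤ 1 :=
      closure_annulus_subset r hz.1
    have hnm : z ∉ annulus r := fun h =>
      hz.2 (by rwa [(annulus_isOpen r).interior_eq])
    have hcase : ‖z‖ = r ∨ ‖z‖ = 1 := by
      by_contra hc
      push_neg at hc
      exact hnm ⟨lt_of_le_of_ne hcl.1 (Ne.symm hc.1), lt_of_le_of_ne hcl.2 hc.2⟩
    have h1 := sub_abs_le_abs_sub x z
    have h2 := abs_sub_le_abs_sub x z
    have h3 := sub_abs_le_abs_sub z y
    have h4 := abs_sub_le_abs_sub z y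
    rcases hcase with h | h
    · calc m ≤ (a + b) - 2 * r := min_le_right _ _
        _ ≤ f z := by simp only [hf]; rw [h] at h2 h4; linarith
    · calc m ≤ 2 - (a + b) := min_le_left _ _
        _ ≤ f z := by simp only [hf]; rw [h] at h1 h3; linarith
  set S : Set ℝ := f '' frontier (annulus r) with hS
  have hSne : S.Nonempty := ⟨f u, ⟨u, hfu, rfl⟩⟩
  have hbdd : BddBelow S := ⟨m, by rintro v ⟨z, hz, rfl⟩; exact hlow z hz⟩
  have hmemS : m ∈ S := by
    rcases min_cases (2 - (a + b)) ((a + b) - 2 * r) with ⟨h, _⟩ | ⟨h, _⟩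
    · exact ⟨u, hfu, by rw [hvu, ← h]⟩
    · exact ⟨(r:ℂ) * u, hfru, by rw [hvru, ← h]⟩
  have hinf : sInf S = m :=
    le_antisymm (csInf_le hbdd hmemS)
      (le_csInf hSne (by rintro v ⟨z, hz, rfl⟩; exact hlow z hz))
  rw [sMetric, habs_add]
  rw [show ((fun z => ‖x - z‖ + ‖z - y‖) ''
      frontier (annulus r)) = S from rfl, hinf, hm]
end

section
/- Let $0<r<1$ and let $x,y\in R(r,1)$ with $|x|=|y|=h$, and let $\mu\in(0,\pi)$ be the angle $\angle x0y$. If $\cos(\mu/2) < r/h$ then $s_{R(r,1)}(x,y)=1$; if $r/h \le \cos(\mu/2) \le h$ then $s_{R(r,1)}(x,y)=\max\{h, \frac{h\sin(\mu/2)}{\sqrt{h^2+r^2-2hr\cos(\mu/2)}}\}$; if $\max\{r/h, h\} \le \cos(\mu/2) \le \frac{1+r}{2h}$ then $s_{R(r,1)}(x,y)=\frac{h\sin(\mu/2)}{\sqrt{h^2+r^2-2hr\cos(\mu/2)}}$; and if $\cos(\mu/2) > \max\{\frac{1+r}{2h}, h\}$ then $s_{R(r,1)}(x,y)=\frac{h\sin(\mu/2)}{\sqrt{1+h^2-2h\cos(\mu/2)}}$.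 -/
open Real Set

/-! ### Auxiliary machinery -/

noncomputable def ip (u v : ℂ) : ℝ := u.re*v.re + u.im*v.im

lemma ip_comm (u v : ℂ) : ip u v = ip v u := by simp [ip]; ring

lemma ip_lagrange (x y z : ℂ) :
    (ip y y)*(ip x z)^2 + (ip x x)*(ip y z)^2 - 2*(ip x z)*(ip y z)*(ip x y)
      = ((ip x x)*(ip y y) - (ip x y)^2)*(ip z z) := by
  simp only [ip]; ring

lemma abs_sub_sq' (u v : ℂ) :
    (‖u - v‖)^2 = ip u u + ip v v - 2 * ip u v := by
  rw [← Complex.normSq_eq_norm_sq]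
  simp [Complex.normSq_apply, ip, Complex.sub_re, Complex.sub_im]; ring

lemma sq_abs_ip (u : ℂ) : (‖u‖)^2 = ip u u := by
  rw [← Complex.normSq_eq_norm_sq]; simp [Complex.normSq_apply, ip]

lemma ip_inner (u v : ℂ) : (inner ℝ u v : ℝ) = ip u v := by
  rw [Complex.inner]; simp [Complex.mul_re, ip]; ring

lemma comb_sq (p q : ℝ) (x y : ℂ) :
    (‖(p:ℂ)*x + (q:ℂ)*y‖)^2 = p^2*(ip x x) + q^2*(ip y y) + 2*p*q*(ip x y) := by
  rw [sq_abs_ip]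
  simp [ip, Complex.add_re, Complex.add_im, Complex.mul_re, Complex.mul_im]
  ring

lemma ip_comb_right (p q : ℝ) (w x y : ℂ) :
    ip w ((p:ℂ)*x + (q:ℂ)*y) = p * ip w x + q * ip w y := by
  simp [ip, Complex.add_re, Complex.add_im, Complex.mul_re, Complex.mul_im]; ring

lemma eq_of_sq_eq {a b : ℝ} (ha : 0 ≤ a) (hb : 0 ≤ b) (h : a^2 = b^2) : a = b := by
  have h0 : (a-b)*(a+b) = 0 := by linear_combination h
  rcases mul_eq_zero.mp h0 with h1 | h1
  · linarith
  · have ha0 : a = 0 := by linarith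
    have hb0 : b = 0 := by linarith
    rw [ha0, hb0]

lemma abs_eq_sqrt_of_sq (w : ℂ) (V : ℝ) (h : (‖w‖)^2 = V) :
    ‖w‖ = Real.sqrt V := by
  have hV : 0 ≤ V := h ▸ sq_nonneg _
  exact eq_of_sq_eq (norm_nonneg w) (Real.sqrt_nonneg V)
    (by rw [h, Real.sq_sqrt hV])

lemma frontier_annulus (r : ℝ) (hr0 : 0 < r) (hr1 : r < 1) :
    frontier (annulus r) = {z : ℂ | ‖z‖ = r} ∪ {z : ℂ | ‖z‖ = 1} := by
  have hclos : closure (annulus r) = {z : ℂ | r ≤ ‖z‖ ∧ ‖z‖ ≤ 1} := by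
    apply Subset.antisymm
    · have hcl : IsClosed {z : ℂ | r ≤ ‖z‖ ∧ ‖z‖ ≤ 1} := by
        have : {z : ℂ | r ≤ ‖z‖ ∧ ‖z‖ ≤ 1} = (fun z : ℂ => ‖z‖) ⁻¹' (Icc r 1) := rfl
        rw [this]; exact isClosed_Icc.preimage continuous_norm
      exact closure_minimal (fun z hz => ⟨hz.1.le, hz.2.le⟩) hcl
    · rintro z ⟨hz1, hz2⟩
      have hz0 : z ≠ 0 := by
        intro h; rw [h] at hz1; simp at hz1; linarith
      have habs : ‖z‖ ≠ 0 := norm_ne_zero_iff.mpr hz0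
      set f : ℝ → ℂ := fun t => (t / ‖z‖ : ℝ) • z with hf
      have hcont : Continuous f := by continuity
      have himg : ∀ t ∈ Ioo r 1, f t ∈ annulus r := by
        rintro t ⟨ht1, ht2⟩
        have habs' : ‖f t‖ = t := by
          simp only [hf]
          rw [norm_smul, Real.norm_eq_abs,
            abs_of_pos (div_pos (lt_trans hr0 ht1) (norm_pos_iff.mpr hz0))]
          field_simp
        constructor <;> simp [habs'] <;> [exact ht1; exact ht2]
      have hmem : ‖z‖ ∈ closure (Ioo r 1) := by
        rw [closure_Ioo (by linarith : r ≠ 1)]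
        exact ⟨hz1, hz2⟩
      have : f (‖z‖) ∈ closure (annulus r) := by
        have h1 : f (‖z‖) ∈ f '' closure (Ioo r 1) := ⟨_, hmem, rfl⟩
        have h2 : f '' closure (Ioo r 1) ⊆ closure (f '' Ioo r 1) :=
          image_closure_subset_closure_image hcont
        have h3 : f '' Ioo r 1 ⊆ annulus r := by
          rintro w ⟨t, ht, rfl⟩; exact himg t ht
        exact closure_mono h3 (h2 h1)
      have hfz : f (‖z‖) = z := by
        simp only [hf]
        rw [div_self habs, one_smul]
      rwa [hfz] at this
  rw [frontier, hclos, (annulus_isOpen r).interior_eq]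
  ext z
  simp only [mem_diff, mem_setOf_eq, mem_union, annulus]
  constructor
  · rintro ⟨⟨h1, h2⟩, h3⟩
    by_cases hb : ‖z‖ = r
    · exact Or.inl hb
    · right
      by_contra hb2
      exact h3 ⟨lt_of_le_of_ne h1 (Ne.symm hb), lt_of_le_of_ne h2 hb2⟩
  · rintro (h | h) <;> constructor
    · exact ⟨le_of_eq h.symm, by rw [h]; linarith⟩
    · rintro ⟨h1, _⟩; rw [h] at h1; exact lt_irrefl r h1
    · exact ⟨by rw [h]; linarith, le_of_eq h⟩
    · rintro ⟨_, h2⟩; rw [h] at h2; exact lt_irrefl 1 h2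

lemma sqrt_add_sqrt_ge (u v T : ℝ) (hu : 0 ≤ u) (hv : 0 ≤ v) (_hT : 0 ≤ T)
    (hkey : 4*T - u - v ≤ 0 ∨ ((4*T - u - v)/2)^2 ≤ u*v) :
    2*Real.sqrt T ≤ Real.sqrt u + Real.sqrt v := by
  have huv : 4*T - u - v ≤ 2*Real.sqrt (u*v) := by
    rcases hkey with hneg | hsq
    · exact hneg.trans (by positivity)
    · rcases le_or_gt (4*T - u - v) 0 with hneg | hpos
      · exact hneg.trans (by positivity)
      · have := (Real.le_sqrt (by linarith) (by nlinarith)).mpr hsq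
        linarith
  have expand : (Real.sqrt u + Real.sqrt v)^2 = u + v + 2*Real.sqrt (u*v) := by
    rw [add_sq, Real.sq_sqrt hu, Real.sq_sqrt hv, Real.sqrt_mul hu]; ring
  have h4 : 4*T ≤ (Real.sqrt u + Real.sqrt v)^2 := by rw [expand]; linarith
  calc 2*Real.sqrt T = Real.sqrt (4*T) := by
        rw [Real.sqrt_mul (by norm_num : (0:ℝ) ≤ 4),
          show Real.sqrt (4:ℝ) = 2 by
            rw [show (4:ℝ) = 2^2 by norm_num, Real.sqrt_sq (by norm_num)]]
    _ ≤ Real.sqrt ((Real.sqrt u + Real.sqrt v)^2) := Real.sqrt_le_sqrt h4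
    _ = Real.sqrt u + Real.sqrt v := Real.sqrt_sq (by positivity)

lemma key1 (h ρ c a b : ℝ) (hh : 0 < h) (hρ : 0 < ρ) (hc : 0 < c) (hc1 : c < 1)
    (hu : 0 ≤ h^2+ρ^2-2*a) (hv : 0 ≤ h^2+ρ^2-2*b)
    (hcon : (a+b)^2 - 4*a*b*c^2 = 4*h^2*ρ^2*(1-c^2)*c^2)
    (hcond : 0 ≤ c*(h^2+ρ^2) - h*ρ*(1+c^2)) :
    2*Real.sqrt (h^2+ρ^2-2*h*ρ*c) ≤ Real.sqrt (h^2+ρ^2-2*a) + Real.sqrt (h^2+ρ^2-2*b) := by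
  have hA2 : 0 ≤ h^2+ρ^2-2*h*ρ*c := by nlinarith [sq_nonneg (h-ρ), mul_pos hh hρ]
  have e0 : (1-c^2)*((2*h*ρ*c)^2 - (a+b)^2) = c^2*(a-b)^2 := by
    linear_combination (-1 : ℝ) * hcon
  have hσ2 : (a+b)^2 ≤ (2*h*ρ*c)^2 := by
    by_contra hcontra
    push_neg at hcontra
    have h1 : (0:ℝ) < 1 - c^2 := by nlinarith
    nlinarith [mul_pos h1 (sub_pos.mpr hcontra), e0,
      mul_nonneg (sq_nonneg c) (sq_nonneg (a-b))]
  have hσ : a + b ≤ 2*h*ρ*c := by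
    nlinarith [mul_pos (mul_pos hh hρ) hc]
  apply sqrt_add_sqrt_ge _ _ _ hu hv hA2
  right
  have key : c^2*((h^2+ρ^2-2*a)*(h^2+ρ^2-2*b) - ((h^2+ρ^2) - 4*h*ρ*c + (a+b))^2)
      = (2*h*ρ*c - (a+b))*(4*c^2*(h^2+ρ^2-2*h*ρ*c) - 2*h*ρ*c*(1-c^2) - (1-c^2)*(a+b)) := by
    linear_combination (-1 : ℝ) * hcon
  have f1 : 0 ≤ 2*h*ρ*c - (a+b) := by linarith
  have f2 : 0 ≤ 4*c^2*(h^2+ρ^2-2*h*ρ*c) - 2*h*ρ*c*(1-c^2) - (1-c^2)*(a+b) := by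
    nlinarith [mul_nonneg hc.le hcond,
      mul_nonneg (by nlinarith : (0:ℝ) ≤ 1-c^2) f1]
  have hprod := mul_nonneg f1 f2
  have hc2 : (0:ℝ) < c^2 := by positivity
  have hmain : ((h^2+ρ^2) - 4*h*ρ*c + (a+b))^2 ≤ (h^2+ρ^2-2*a)*(h^2+ρ^2-2*b) := by nlinarith
  calc ((4*(h^2+ρ^2-2*h*ρ*c) - (h^2+ρ^2-2*a) - (h^2+ρ^2-2*b))/2)^2
      = ((h^2+ρ^2) - 4*h*ρ*c + (a+b))^2 := by ring
    _ ≤ _ := hmain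

lemma key2 (h c a b : ℝ) (_hh : 0 < h) (hc : 0 < c) (hc1 : c < 1)
    (hu : 0 ≤ h^2+1-2*a) (hv : 0 ≤ h^2+1-2*b)
    (hcon : (a+b)^2 - 4*a*b*c^2 = 4*h^2*1*(1-c^2)*c^2) :
    2*Real.sqrt (1-c^2) ≤ Real.sqrt (h^2+1-2*a) + Real.sqrt (h^2+1-2*b) := by
  have hs2 : (0:ℝ) ≤ 1 - c^2 := by nlinarith
  apply sqrt_add_sqrt_ge _ _ _ hu hv hs2
  right
  have key : c^2*((h^2+1-2*a)*(h^2+1-2*b) - (2*(1-c^2) - (h^2+1) + (a+b))^2)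
      = (1-c^2)*((a+b) - 2*c^2)^2 := by
    linear_combination (-1 : ℝ) * hcon
  have hc2 : (0:ℝ) < c^2 := by positivity
  have hmain : (2*(1-c^2) - (h^2+1) + (a+b))^2 ≤ (h^2+1-2*a)*(h^2+1-2*b) := by
    nlinarith [mul_nonneg hs2 (sq_nonneg ((a+b) - 2*c^2))]
  calc ((4*(1-c^2) - (h^2+1-2*a) - (h^2+1-2*b))/2)^2
      = (2*(1-c^2) - (h^2+1) + (a+b))^2 := by ring
    _ ≤ _ := hmain

lemma gram (x y z : ℂ) (h ρ c : ℝ) (hh : 0 < h)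
    (hxx : ip x x = h^2) (hyy : ip y y = h^2) (hd : ip x y = h^2*(2*c^2-1))
    (hz : ‖z‖ = ρ) :
    (ip x z + ip y z)^2 - 4*(ip x z)*(ip y z)*c^2 = 4*h^2*ρ^2*(1-c^2)*c^2 := by
  have hzz : ip z z = ρ^2 := by rw [← sq_abs_ip, hz]
  have lag := ip_lagrange x y z
  rw [hxx, hyy, hd, hzz] at lag
  have hh2 : (h:ℝ)^2 ≠ 0 := by positivity
  have : h^2*((ip x z + ip y z)^2 - 4*(ip x z)*(ip y z)*c^2)
      = h^2*(4*h^2*ρ^2*(1-c^2)*c^2) := by linear_combination lag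
  exact mul_left_cancel₀ hh2 this

lemma lb_sphere (x y z : ℂ) (h ρ c : ℝ) (hh : 0 < h) (hρ : 0 < ρ) (hc : 0 < c) (hc1 : c < 1)
    (hxx : ip x x = h^2) (hyy : ip y y = h^2) (hd : ip x y = h^2*(2*c^2-1))
    (hz : ‖z‖ = ρ)
    (hcond : 0 ≤ c*(h^2+ρ^2) - h*ρ*(1+c^2)) :
    2*Real.sqrt (h^2+ρ^2-2*h*ρ*c) ≤ ‖x - z‖ + ‖z - y‖ := by
  have hzz : ip z z = ρ^2 := by rw [← sq_abs_ip, hz]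
  have hu : (‖x - z‖)^2 = h^2+ρ^2-2*(ip x z) := by
    rw [abs_sub_sq', hxx, hzz]
  have hv : (‖z - y‖)^2 = h^2+ρ^2-2*(ip y z) := by
    rw [abs_sub_sq', hyy, hzz, ip_comm z y]; ring
  rw [abs_eq_sqrt_of_sq _ _ hu, abs_eq_sqrt_of_sq _ _ hv]
  exact key1 h ρ c _ _ hh hρ hc hc1 (hu ▸ sq_nonneg _) (hv ▸ sq_nonneg _)
    (gram x y z h ρ c hh hxx hyy hd hz) hcond

lemma lb_sphere_one (x y z : ℂ) (h c : ℝ) (hh : 0 < h) (hc : 0 < c) (hc1 : c < 1)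
    (hxx : ip x x = h^2) (hyy : ip y y = h^2) (hd : ip x y = h^2*(2*c^2-1))
    (hz : ‖z‖ = 1) :
    2*Real.sqrt (1-c^2) ≤ ‖x - z‖ + ‖z - y‖ := by
  have hzz : ip z z = 1 := by rw [← sq_abs_ip, hz]; norm_num
  have hu : (‖x - z‖)^2 = h^2+1-2*(ip x z) := by
    rw [abs_sub_sq', hxx, hzz]
  have hv : (‖z - y‖)^2 = h^2+1-2*(ip y z) := by
    rw [abs_sub_sq', hyy, hzz, ip_comm z y]; ring
  rw [abs_eq_sqrt_of_sq _ _ hu, abs_eq_sqrt_of_sq _ _ hv]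
  have hgr := gram x y z h 1 c hh hxx hyy hd hz
  exact key2 h c _ _ hh hc hc1 (hu ▸ sq_nonneg _) (hv ▸ sq_nonneg _) (by linarith [hgr])

lemma wit_mid (x y : ℂ) (h c : ℝ) (hh : 0 < h) (hc : 0 < c)
    (hxx : ip x x = h^2) (hyy : ip y y = h^2) (hd : ip x y = h^2*(2*c^2-1)) (ρ : ℝ) (hρ : 0 < ρ) :
    ∃ z : ℂ, ‖z‖ = ρ ∧
      ‖x - z‖ + ‖z - y‖ = 2*Real.sqrt (h^2+ρ^2-2*h*ρ*c) := by
  set t : ℝ := ρ/(2*h*c) with ht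
  refine ⟨(t:ℂ)*(x+y), ?_, ?_⟩
  · have h1 : ((t:ℂ)*(x+y)) = (t:ℂ)*x + (t:ℂ)*y := by ring
    have h2 : (‖(t:ℂ)*(x+y)‖)^2 = ρ^2 := by
      rw [h1, comb_sq, hxx, hyy, hd, ht]; field_simp; ring
    have := abs_eq_sqrt_of_sq _ _ h2
    rwa [Real.sqrt_sq hρ.le] at this
  · have hx1 : x - (t:ℂ)*(x+y) = ((1-t:ℝ):ℂ)*x + ((-t:ℝ):ℂ)*y := by push_cast; ring
    have hy1 : (t:ℂ)*(x+y) - y = ((t:ℝ):ℂ)*x + ((t-1:ℝ):ℂ)*y := by push_cast; ring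
    have e1 : (‖x - (t:ℂ)*(x+y)‖)^2 = h^2+ρ^2-2*h*ρ*c := by
      rw [hx1, comb_sq, hxx, hyy, hd, ht]; field_simp; ring
    have e2 : (‖(t:ℂ)*(x+y) - y‖)^2 = h^2+ρ^2-2*h*ρ*c := by
      rw [hy1, comb_sq, hxx, hyy, hd, ht]; field_simp; ring
    rw [abs_eq_sqrt_of_sq _ _ e1, abs_eq_sqrt_of_sq _ _ e2]
    ring

lemma wit_tangent (x y : ℂ) (h c s : ℝ) (hh : 0 < h) (hh1 : h ≤ 1) (hc : 0 < c) (hs : 0 < s)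
    (hs2 : s^2 = 1 - c^2) (hch : c ≤ h)
    (hxx : ip x x = h^2) (hyy : ip y y = h^2) (hd : ip x y = h^2*(2*c^2-1)) :
    ∃ z : ℂ, ‖z‖ = 1 ∧
      ‖x - z‖ + ‖z - y‖ = 2*s := by
  have hh2 : (h:ℝ)^2 ≠ 0 := by positivity
  have hsne : s ≠ 0 := ne_of_gt hs
  set W : ℝ := Real.sqrt (h^2 - c^2) with hWdef
  have hW2 : W^2 = h^2 - c^2 := Real.sq_sqrt (by nlinarith)
  have hW0 : 0 ≤ W := Real.sqrt_nonneg _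
  set p : ℝ := 1/(2*h^2) + W/(2*h^2*s) with hp
  set q : ℝ := 1/(2*h^2) - W/(2*h^2*s) with hq
  set z : ℂ := (p:ℂ)*x + (q:ℂ)*y with hz
  have hzz : (‖z‖)^2 = 1 := by
    rw [hz, comb_sq, hxx, hyy, hd, hp, hq]
    have e : (1/(2*h^2) + W/(2*h^2*s))^2*h^2 + (1/(2*h^2) - W/(2*h^2*s))^2*h^2
        + 2*(1/(2*h^2) + W/(2*h^2*s))*(1/(2*h^2) - W/(2*h^2*s))*(h^2*(2*c^2-1))
        = (W^2*(1-c^2) + c^2*s^2)/(h^2*s^2) := by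
      field_simp; ring
    rw [e]
    rw [div_eq_one_iff_eq (by positivity)]
    linear_combination (1-c^2)*hW2 + (c^2-h^2)*hs2
  have habsz : ‖z‖ = 1 := by
    have := abs_eq_sqrt_of_sq _ _ hzz
    rwa [Real.sqrt_one] at this
  have hipzz : ip z z = 1 := by rw [← sq_abs_ip, hzz]
  have ha : ip x z = c^2 + s*W := by
    rw [hz, ip_comb_right, ip_comm x x, hxx, hd, hp, hq]
    field_simp
    linear_combination (-2*W)*hs2
  have hb : ip y z = c^2 - s*W := by
    rw [hz, ip_comb_right, ip_comm y x, hd, ip_comm y y, hyy, hp, hq]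
    field_simp
    linear_combination (2*W)*hs2
  have hu : (‖x - z‖)^2 = h^2+1-2*c^2-2*s*W := by
    rw [abs_sub_sq', hxx, hipzz, ha]; ring
  have hv : (‖z - y‖)^2 = h^2+1-2*c^2+2*s*W := by
    rw [abs_sub_sq', hyy, hipzz, ip_comm z y, hb]; ring
  have hu0 : 0 ≤ h^2+1-2*c^2-2*s*W := hu ▸ sq_nonneg _
  have hv0 : 0 ≤ h^2+1-2*c^2+2*s*W := hv ▸ sq_nonneg _
  refine ⟨z, habsz, ?_⟩
  rw [abs_eq_sqrt_of_sq _ _ hu, abs_eq_sqrt_of_sq _ _ hv]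
  have hprod : (h^2+1-2*c^2-2*s*W)*(h^2+1-2*c^2+2*s*W) = (1-h^2)^2 := by
    linear_combination (-4*s^2)*hW2 + (4*c^2-4*h^2)*hs2
  apply eq_of_sq_eq (by positivity) (by positivity)
  have hm : Real.sqrt (h^2+1-2*c^2-2*s*W) * Real.sqrt (h^2+1-2*c^2+2*s*W) = 1-h^2 := by
    rw [← Real.sqrt_mul hu0, hprod, Real.sqrt_sq (by nlinarith : (0:ℝ) ≤ 1-h^2)]
  rw [add_sq, Real.sq_sqrt hu0, Real.sq_sqrt hv0]
  linear_combination 2*hm - 4*hs2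

lemma wit_seg (x y : ℂ) (h c r : ℝ) (_hh : 0 < h) (_hc : 0 < c)
    (hxh : ‖x‖ = h) (hsum : ‖x+y‖ = 2*h*c)
    (hcr : h*c < r) (hrh : r < h) :
    ∃ z : ℂ, ‖z‖ = r ∧
      ‖x - z‖ + ‖z - y‖ = ‖x - y‖ := by
  set g : ℝ → ℝ := fun t => ‖x + (t:ℂ)*(y-x)‖ with hg
  have hcont : Continuous g := by
    apply continuous_norm.comp
    exact continuous_const.add (Complex.continuous_ofReal.mul continuous_const)
  have hg0 : g 0 = h := by simp [hg, hxh]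
  have hg12 : g (1/2) = h*c := by
    have he : x + ((1/2 : ℝ):ℂ)*(y-x) = ((1/2:ℝ):ℂ)*(x+y) := by push_cast; ring
    rw [hg]
    simp only [he, norm_mul]
    rw [hsum]
    have : ‖((1/2:ℝ):ℂ)‖ = 1/2 := by
      rw [Complex.norm_real, Real.norm_eq_abs]; norm_num
    rw [this]; ring
  have hmem : r ∈ Icc (g (1/2)) (g 0) := by
    rw [hg0, hg12]; exact ⟨hcr.le, hrh.le⟩
  have := intermediate_value_Icc' (by norm_num : (0:ℝ) ≤ 1/2) hcont.continuousOn hmem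
  obtain ⟨t, ht, hgt⟩ := this
  refine ⟨x + (t:ℂ)*(y-x), hgt, ?_⟩
  have h1 : x - (x + (t:ℂ)*(y-x)) = (t:ℂ)*(x-y) := by ring
  have h2 : (x + (t:ℂ)*(y-x)) - y = ((1-t:ℝ):ℂ)*(x-y) := by push_cast; ring
  rw [h1, h2, norm_mul, norm_mul, Complex.norm_real, Complex.norm_real, Real.norm_eq_abs, Real.norm_eq_abs,
    abs_of_nonneg ht.1, abs_of_nonneg (by linarith [ht.2] : (0:ℝ) ≤ 1-t)]
  ring

/-- The four-case formula for `s_{R(r,1)}(x,y)` when `|x| = |y| = h` and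
`μ ∈ (0,π)` is the angle `∠x0y`. -/
theorem stmt4 (r h μ : ℝ) (hr0 : 0 < r) (hr1 : r < 1) (x y : ℂ)
    (hx : x ∈ annulus r) (hy : y ∈ annulus r)
    (hxh : ‖x‖ = h) (hyh : ‖y‖ = h)
    (hμ : μ = EuclideanGeometry.angle x 0 y) (hμ0 : 0 < μ) (hμπ : μ < π) :
    (Real.cos (μ / 2) < r / h → sMetric (annulus r) x y = 1) ∧
    (r / h ≤ Real.cos (μ / 2) ∧ Real.cos (μ / 2) ≤ h →
      sMetric (annulus r) x y =
        max h (h * Real.sin (μ / 2) /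
          Real.sqrt (h ^ 2 + r ^ 2 - 2 * h * r * Real.cos (μ / 2)))) ∧
    (max (r / h) h ≤ Real.cos (μ / 2) ∧ Real.cos (μ / 2) ≤ (1 + r) / (2 * h) →
      sMetric (annulus r) x y =
        h * Real.sin (μ / 2) /
          Real.sqrt (h ^ 2 + r ^ 2 - 2 * h * r * Real.cos (μ / 2))) ∧
    (Real.cos (μ / 2) > max ((1 + r) / (2 * h)) h →
      sMetric (annulus r) x y =
        h * Real.sin (μ / 2) /
          Real.sqrt (1 + h ^ 2 - 2 * h * Real.cos (μ / 2))) := by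
  obtain ⟨hxr, hx1⟩ := hx
  obtain ⟨hyr, hy1⟩ := hy
  have hrh : r < h := hxh ▸ hxr
  have hh1 : h < 1 := hxh ▸ hx1
  have hh0 : 0 < h := lt_trans hr0 hrh
  set c := Real.cos (μ/2) with hcdef
  set s := Real.sin (μ/2) with hsdef
  have hc0 : 0 < c := Real.cos_pos_of_mem_Ioo ⟨by linarith [Real.pi_pos], by linarith⟩
  have hs0 : 0 < s := Real.sin_pos_of_pos_of_lt_pi (by linarith) (by linarith [Real.pi_pos])
  have hsc1 : s^2 + c^2 = 1 := Real.sin_sq_add_cos_sq (μ/2)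
  have hs2 : s^2 = 1 - c^2 := by linarith
  have hc1 : c < 1 := by nlinarith
  have hxx : ip x x = h^2 := by rw [← sq_abs_ip, hxh]
  have hyy : ip y y = h^2 := by rw [← sq_abs_ip, hyh]
  have hcosμ : Real.cos μ = ip x y / (h*h) := by
    rw [hμ, EuclideanGeometry.angle]
    simp only [vsub_eq_sub, sub_zero]
    rw [InnerProductGeometry.cos_angle, ip_inner]
    rw [hxh, hyh]
  have hd : ip x y = h^2*(2*c^2-1) := by
    have h2 : Real.cos μ = 2*c^2 - 1 := by
      rw [show μ = 2*(μ/2) by ring, Real.cos_two_mul]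
    rw [h2] at hcosμ
    field_simp at hcosμ
    linear_combination (-1 : ℝ) * hcosμ
  have habsxy : ‖x - y‖ = 2*h*s := by
    apply eq_of_sq_eq (norm_nonneg _) (by positivity)
    rw [abs_sub_sq', hxx, hyy, hd]
    linear_combination (-4*h^2)*hs2
  have hsumxy : ‖x + y‖ = 2*h*c := by
    apply eq_of_sq_eq (norm_nonneg _) (by positivity)
    have hxy1 : x + y = ((1:ℝ):ℂ)*x + ((1:ℝ):ℂ)*y := by push_cast; ring
    rw [hxy1, comb_sq, hxx, hyy, hd]; ring
  have hfr := frontier_annulus r hr0 hr1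
  have hsq1 : Real.sqrt (1-c^2) = s := by
    rw [← hs2, Real.sqrt_sq hs0.le]
  have hA2pos : 0 < h^2+r^2-2*h*r*c := by nlinarith [sq_nonneg (h-r), mul_pos hh0 hr0]
  have hB2pos : 0 < h^2+1^2-2*h*1*c := by nlinarith [sq_nonneg (h-1)]
  set A := Real.sqrt (h^2+r^2-2*h*r*c) with hAdef
  set B := Real.sqrt (h^2+1^2-2*h*1*c) with hBdef
  have hApos : 0 < A := Real.sqrt_pos.mpr hA2pos
  have hBpos : 0 < B := Real.sqrt_pos.mpr hB2pos
  refine ⟨?_, ?_, ?_, ?_⟩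
  -- Case 1
  · intro hclt
    have hcr : h*c < r := by
      have := (lt_div_iff₀ hh0).mp hclt
      linarith [this]
    obtain ⟨z0, hz0r, hz0f⟩ := wit_seg x y h c r hh0 hc0 hxh hsumxy hcr hrh
    have hIL : IsLeast ((fun z => ‖x - z‖ + ‖z - y‖) ''
        frontier (annulus r)) (‖x - y‖) := by
      constructor
      · exact ⟨z0, by rw [hfr]; exact Or.inl hz0r, hz0f⟩
      · rintro w ⟨z, _, rfl⟩
        calc ‖x - y‖ = ‖(x - z) + (z - y)‖ := by
              rw [sub_add_sub_cancel]
          _ ≤ ‖x - z‖ + ‖z - y‖ := norm_add_le _ _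
    unfold sMetric
    rw [hIL.csInf_eq, div_self (by rw [habsxy]; positivity)]
  -- Case 2
  · rintro ⟨h2a, h2b⟩
    have hrc : r ≤ c*h := by
      have := (div_le_iff₀ hh0).mp h2a
      linarith [this]
    have hcondr : 0 ≤ c*(h^2+r^2) - h*r*(1+c^2) := by
      have hf1 : (0:ℝ) ≤ h - r*c := by
        have := mul_lt_of_lt_one_right hr0 hc1
        linarith
      have hf2 : (0:ℝ) ≤ c*h - r := by linarith
      have e : c*(h^2+r^2) - h*r*(1+c^2) = (h - r*c)*(c*h - r) := by ring
      rw [e]; exact mul_nonneg hf1 hf2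
    have hlbr : ∀ z : ℂ, ‖z‖ = r →
        2*A ≤ ‖x - z‖ + ‖z - y‖ := fun z hz =>
      lb_sphere x y z h r c hh0 hr0 hc0 hc1 hxx hyy hd hz hcondr
    have hlb1 : ∀ z : ℂ, ‖z‖ = 1 →
        2*s ≤ ‖x - z‖ + ‖z - y‖ := by
      intro z hz
      have := lb_sphere_one x y z h c hh0 hc0 hc1 hxx hyy hd hz
      rwa [hsq1] at this
    have hIL : IsLeast ((fun z => ‖x - z‖ + ‖z - y‖) ''
        frontier (annulus r)) (min (2*A) (2*s)) := by
      constructor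
      · rcases le_total A s with hAs | hsA
        · rw [min_eq_left (by linarith)]
          obtain ⟨z0, hz0, hz0f⟩ := wit_mid x y h c hh0 hc0 hxx hyy hd r hr0
          exact ⟨z0, by rw [hfr]; exact Or.inl hz0, hz0f⟩
        · rw [min_eq_right (by linarith)]
          obtain ⟨z0, hz0, hz0f⟩ := wit_tangent x y h c s hh0 hh1.le hc0 hs0 hs2 h2b hxx hyy hd
          exact ⟨z0, by rw [hfr]; exact Or.inr hz0, hz0f⟩
      · rintro w ⟨z, hzF, rfl⟩
        rw [hfr] at hzF
        rcases hzF with hz | hz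
        · exact le_trans (min_le_left _ _) (hlbr z hz)
        · exact le_trans (min_le_right _ _) (hlb1 z hz)
    unfold sMetric
    rw [hIL.csInf_eq, habsxy]
    rcases le_total A s with hAs | hsA
    · rw [min_eq_left (by linarith), max_eq_right (by
        rw [le_div_iff₀ hApos]
        exact mul_le_mul_of_nonneg_left hAs hh0.le)]
      rw [div_eq_div_iff (by positivity) (by positivity)]
      ring
    · rw [min_eq_right (by linarith), max_eq_left (by
        rw [div_le_iff₀ hApos]
        exact mul_le_mul_of_nonneg_left hsA hh0.le)]
      rw [show (2:ℝ)*h*s = h*(2*s) by ring, mul_div_assoc, div_self (by positivity), mul_one]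
  -- Case 3
  · rintro ⟨h3a, h3b⟩
    have h3ar : r/h ≤ c := le_trans (le_max_left _ _) h3a
    have h3ah : h ≤ c := le_trans (le_max_right _ _) h3a
    have hrc : r ≤ c*h := by
      have := (div_le_iff₀ hh0).mp h3ar
      linarith [this]
    have h2hc : 2*h*c ≤ 1+r := by
      have := (le_div_iff₀ (by positivity : (0:ℝ) < 2*h)).mp h3b
      linarith [this]
    have hcondr : 0 ≤ c*(h^2+r^2) - h*r*(1+c^2) := by
      have hf1 : (0:ℝ) ≤ h - r*c := by
        have := mul_lt_of_lt_one_right hr0 hc1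
        linarith
      have hf2 : (0:ℝ) ≤ c*h - r := by linarith
      have e : c*(h^2+r^2) - h*r*(1+c^2) = (h - r*c)*(c*h - r) := by ring
      rw [e]; exact mul_nonneg hf1 hf2
    have hcond1 : 0 ≤ c*(h^2+1^2) - h*1*(1+c^2) := by
      have hf1 : (0:ℝ) ≤ c - h := by linarith
      have hf2 : (0:ℝ) ≤ 1 - c*h := by
        have := mul_lt_of_lt_one_right hc0 hh1
        linarith
      have e : c*(h^2+1^2) - h*1*(1+c^2) = (c - h)*(1 - c*h) := by ring
      rw [e]; exact mul_nonneg hf1 hf2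
    have hAB : A ≤ B := by
      apply Real.sqrt_le_sqrt
      have e : (h^2+1^2-2*h*1*c) - (h^2+r^2-2*h*r*c) = (1-r)*(1+r-2*h*c) := by ring
      have hp := mul_nonneg (by linarith : (0:ℝ) ≤ 1 - r) (by linarith : (0:ℝ) ≤ 1 + r - 2*h*c)
      linarith
    have hIL : IsLeast ((fun z => ‖x - z‖ + ‖z - y‖) ''
        frontier (annulus r)) (2*A) := by
      constructor
      · obtain ⟨z0, hz0, hz0f⟩ := wit_mid x y h c hh0 hc0 hxx hyy hd r hr0
        exact ⟨z0, by rw [hfr]; exact Or.inl hz0, hz0f⟩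
      · rintro w ⟨z, hzF, rfl⟩
        rw [hfr] at hzF
        rcases hzF with hz | hz
        · exact lb_sphere x y z h r c hh0 hr0 hc0 hc1 hxx hyy hd hz hcondr
        · have := lb_sphere x y z h 1 c hh0 one_pos hc0 hc1 hxx hyy hd hz hcond1
          have hAB2 : 2*A ≤ 2*B := by linarith
          exact le_trans hAB2 this
    unfold sMetric
    rw [hIL.csInf_eq, habsxy]
    rw [div_eq_div_iff (by positivity) (by positivity)]
    ring
  -- Case 4
  · intro h4
    have h4a : (1+r)/(2*h) < c := lt_of_le_of_lt (le_max_left _ _) h4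
    have h4h : h < c := lt_of_le_of_lt (le_max_right _ _) h4
    have h2hc : 1+r < 2*h*c := by
      have := (div_lt_iff₀ (by positivity : (0:ℝ) < 2*h)).mp h4a
      linarith [this]
    have hrc : r ≤ c*h := by linarith
    have hcondr : 0 ≤ c*(h^2+r^2) - h*r*(1+c^2) := by
      have hf1 : (0:ℝ) ≤ h - r*c := by
        have := mul_lt_of_lt_one_right hr0 hc1
        linarith
      have hf2 : (0:ℝ) ≤ c*h - r := by linarith
      have e : c*(h^2+r^2) - h*r*(1+c^2) = (h - r*c)*(c*h - r) := by ring
      rw [e]; exact mul_nonneg hf1 hf2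
    have hcond1 : 0 ≤ c*(h^2+1^2) - h*1*(1+c^2) := by
      have hf1 : (0:ℝ) ≤ c - h := by linarith
      have hf2 : (0:ℝ) ≤ 1 - c*h := by
        have := mul_lt_of_lt_one_right hc0 hh1
        linarith
      have e : c*(h^2+1^2) - h*1*(1+c^2) = (c - h)*(1 - c*h) := by ring
      rw [e]; exact mul_nonneg hf1 hf2
    have hBA : B ≤ A := by
      apply Real.sqrt_le_sqrt
      have e : (h^2+r^2-2*h*r*c) - (h^2+1^2-2*h*1*c) = (1-r)*(2*h*c - (1+r)) := by ring
      have hp := mul_nonneg (by linarith : (0:ℝ) ≤ 1 - r) (by linarith : (0:ℝ) ≤ 2*h*c - (1+r))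
      linarith
    have hIL : IsLeast ((fun z => ‖x - z‖ + ‖z - y‖) ''
        frontier (annulus r)) (2*B) := by
      constructor
      · obtain ⟨z0, hz0, hz0f⟩ := wit_mid x y h c hh0 hc0 hxx hyy hd 1 one_pos
        exact ⟨z0, by rw [hfr]; exact Or.inr hz0, hz0f⟩
      · rintro w ⟨z, hzF, rfl⟩
        rw [hfr] at hzF
        rcases hzF with hz | hz
        · have := lb_sphere x y z h r c hh0 hr0 hc0 hc1 hxx hyy hd hz hcondr
          have hBA2 : 2*B ≤ 2*A := by linarith
          exact le_trans hBA2 this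
        · exact lb_sphere x y z h 1 c hh0 one_pos hc0 hc1 hxx hyy hd hz hcond1
    unfold sMetric
    rw [hIL.csInf_eq, habsxy]
    rw [show (1:ℝ) + h^2 - 2*h*c = h^2+1^2-2*h*1*c by ring]
    rw [div_eq_div_iff (by positivity) (by positivity)]
    ring
end

section
/- For all $x,y$ in the punctured unit disk $\mathbb{B}^2\setminus\{0\}$ with $|y|\le|x|$, the Möbius metric satisfies $\delta_{\mathbb{B}^2\setminus\{0\}}(x,y) = \max\left\{ \rho_{\mathbb{B}^2}(x,y),\ \log\left(1 + \frac{|x-y|}{(1-|x|)|y|}\right) \right\}$. -/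
open Real Set

/-- The inverse hyperbolic tangent. -/
noncomputable def arth (x : ℝ) : ℝ := Real.log ((1 + x) / (1 - x)) / 2

/-- The hyperbolic metric of the unit disk, via `th(ρ(x,y)/2) = |(x-y)/(1-x·ȳ)|`. -/
noncomputable def rhoDisk (x y : ℂ) : ℝ :=
  2 * arth (‖(x - y) / (1 - x * (starRingEnd ℂ) y)‖)

private lemma unit_conj_trick (a y : ℂ) (ha : ‖a‖ = 1) :
    ‖a * (starRingEnd ℂ) y - 1‖ = ‖a - y‖ := by
  have h1 : a * (starRingEnd ℂ) a = 1 := by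
    rw [Complex.mul_conj]
    norm_cast
    rw [← Complex.sq_norm, ha]; norm_num
  have h2 : a * (starRingEnd ℂ) y - 1 = a * ((starRingEnd ℂ) y - (starRingEnd ℂ) a) := by
    rw [mul_sub, h1]
  rw [h2, norm_mul, ha, one_mul, ← map_sub, Complex.norm_conj, norm_sub_rev]

private lemma circle_ineq (a b x y : ℂ) (ha : ‖a‖ = 1) (hb : ‖b‖ = 1) :
    ‖a - b‖ * ‖1 - x * (starRingEnd ℂ) y‖ ≤
      2 * (‖a - x‖ * ‖b - y‖) +
      ‖a - b‖ * ‖x - y‖ := by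
  have step1 : ‖a - b‖ * ‖1 - x * (starRingEnd ℂ) y‖ ≤
      ‖a - x‖ * ‖b - y‖ +
      ‖x - b‖ * ‖a - y‖ := by
    have id1 : (a - b) * (x * (starRingEnd ℂ) y - 1) =
        (a - x) * (b * (starRingEnd ℂ) y - 1) + (x - b) * (a * (starRingEnd ℂ) y - 1) := by
      ring
    calc ‖a - b‖ * ‖1 - x * (starRingEnd ℂ) y‖
        = ‖(a - b) * (x * (starRingEnd ℂ) y - 1)‖ := by
          rw [norm_mul, norm_sub_rev (1 : ℂ)]
      _ ≤ ‖(a - x) * (b * (starRingEnd ℂ) y - 1)‖ +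
          ‖(x - b) * (a * (starRingEnd ℂ) y - 1)‖ := by
          rw [id1]; exact norm_add_le _ _
      _ = ‖a - x‖ * ‖b - y‖ +
          ‖x - b‖ * ‖a - y‖ := by
          rw [norm_mul, norm_mul, unit_conj_trick b y hb, unit_conj_trick a y ha]
  have step2 : ‖x - b‖ * ‖a - y‖ ≤
      ‖a - x‖ * ‖b - y‖ + ‖a - b‖ * ‖x - y‖ := by
    have id2 : (x - b) * (a - y) = (a - x) * (y - b) + (x - y) * (a - b) := by ring
    calc ‖x - b‖ * ‖a - y‖ = ‖(x - b) * (a - y)‖ := (norm_mul _ _).symm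
      _ ≤ ‖(a - x) * (y - b)‖ + ‖(x - y) * (a - b)‖ := by
          rw [id2]; exact norm_add_le _ _
      _ = ‖a - x‖ * ‖b - y‖ + ‖a - b‖ * ‖x - y‖ := by
          rw [norm_mul, norm_mul, norm_sub_rev y b, mul_comm (‖x-y‖)]
  linarith

private lemma disk_ineq (x y : ℂ) (hx : ‖x‖ < 1) (hy : ‖y‖ < 1) :
    ‖x - y‖ < ‖1 - x * (starRingEnd ℂ) y‖ := by
  have key : ‖1 - x * (starRingEnd ℂ) y‖ ^ 2 - ‖x - y‖ ^ 2 =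
      (1 - ‖x‖ ^ 2) * (1 - ‖y‖ ^ 2) := by
    rw [Complex.sq_norm, Complex.sq_norm, Complex.sq_norm, Complex.sq_norm]
    simp only [Complex.normSq_apply, Complex.sub_re, Complex.sub_im, Complex.mul_re,
      Complex.mul_im, Complex.conj_re, Complex.conj_im, Complex.one_re, Complex.one_im]
    ring
  have h1 : 0 < (1 - ‖x‖ ^ 2) * (1 - ‖y‖ ^ 2) := by
    have hx2 : ‖x‖ ^ 2 < 1 := by nlinarith [norm_nonneg x]
    have hy2 : ‖y‖ ^ 2 < 1 := by nlinarith [norm_nonneg y]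
    nlinarith [hx2, hy2]
  have h2 : ‖x - y‖ ^ 2 < ‖1 - x * (starRingEnd ℂ) y‖ ^ 2 := by linarith
  exact lt_of_pow_lt_pow_left₀ 2 (norm_nonneg _) h2

private lemma zero_mem_closure :
    (0 : ℂ) ∈ closure (Metric.ball (0 : ℂ) 1 \ {0}) := by
  rw [Metric.mem_closure_iff]
  intro ε hε
  refine ⟨(min ε 1 / 2 : ℝ), ⟨?_, ?_⟩, ?_⟩
  · rw [Metric.mem_ball, dist_zero_right]
    rw [Complex.norm_real]
    rw [Real.norm_eq_abs, abs_of_pos (by positivity)]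
    have := min_le_right ε 1; linarith
  · simp only [mem_singleton_iff]
    intro h
    have : (min ε 1 / 2 : ℝ) = 0 := by exact_mod_cast h
    have := lt_min hε one_pos
    linarith
  · rw [dist_comm, dist_zero_right, Complex.norm_real, Real.norm_eq_abs,
      abs_of_pos (by positivity)]
    have := min_le_left ε 1; linarith

private lemma frontier_mem_char (z : ℂ) (hz : z ∈ frontier (Metric.ball (0 : ℂ) 1 \ {0})) :
    ‖z‖ = 1 ∨ z = 0 := by
  have hopen : IsOpen (Metric.ball (0 : ℂ) 1 \ {0}) :=
    Metric.isOpen_ball.sdiff isClosed_singleton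
  rw [hopen.frontier_eq] at hz
  obtain ⟨h1, h2⟩ := hz
  by_cases h0 : z = 0
  · exact Or.inr h0
  left
  have hle : ‖z‖ ≤ 1 := by
    have := closure_mono (diff_subset (s := Metric.ball (0:ℂ) 1) (t := {0})) h1
    rw [closure_ball (0:ℂ) one_ne_zero, Metric.mem_closedBall, dist_zero_right] at this
    exact this
  rcases lt_or_eq_of_le hle with h | h
  · exact absurd ⟨Metric.mem_ball.mpr (by rwa [dist_zero_right]), h0⟩ h2
  · exact h

private lemma sphere_mem_frontier (z : ℂ) (hz : ‖z‖ = 1) :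
    z ∈ frontier (Metric.ball (0 : ℂ) 1 \ {0}) := by
  have hopen : IsOpen (Metric.ball (0 : ℂ) 1 \ {0}) :=
    Metric.isOpen_ball.sdiff isClosed_singleton
  rw [hopen.frontier_eq]
  constructor
  · have hball : Metric.ball (0:ℂ) 1 ⊆ closure (Metric.ball (0 : ℂ) 1 \ {0}) := by
      intro w hw
      by_cases hw0 : w = 0
      · rw [hw0]; exact zero_mem_closure
      · exact subset_closure ⟨hw, hw0⟩
    have : Metric.closedBall (0:ℂ) 1 ⊆ closure (Metric.ball (0 : ℂ) 1 \ {0}) := by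
      rw [← closure_ball (0:ℂ) one_ne_zero]
      exact closure_minimal hball isClosed_closure
    exact this (by rw [Metric.mem_closedBall, dist_zero_right, hz])
  · intro ⟨h1, _⟩
    rw [Metric.mem_ball, dist_zero_right, hz] at h1
    exact lt_irrefl _ h1

private lemma zero_mem_frontier :
    (0 : ℂ) ∈ frontier (Metric.ball (0 : ℂ) 1 \ {0}) := by
  have hopen : IsOpen (Metric.ball (0 : ℂ) 1 \ {0}) :=
    Metric.isOpen_ball.sdiff isClosed_singleton
  rw [hopen.frontier_eq]
  exact ⟨zero_mem_closure, fun h => h.2 rfl⟩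

private lemma mobius_pair (x y u : ℂ) (m : ℝ) (hx : ‖x‖ < 1)
    (hu : ‖u‖ = 1) (hm0 : 0 < m) (hm1 : m < 1)
    (hy : y * (1 + (m : ℂ) * ((starRingEnd ℂ) x * u)) = (m : ℂ) * u + x) :
    ‖(x - u) / (1 - (starRingEnd ℂ) x * u)‖ = 1 ∧
    ‖(u + x) / (1 + (starRingEnd ℂ) x * u)‖ = 1 ∧
    crossRatio ((x - u) / (1 - (starRingEnd ℂ) x * u)) x
      ((u + x) / (1 + (starRingEnd ℂ) x * u)) y = 2 * m / (1 - m) := by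
  have habs_t : ‖(starRingEnd ℂ) x * u‖ = ‖x‖ := by
    rw [norm_mul, Complex.norm_conj, hu, mul_one]
  have h1t : (1 : ℂ) - (starRingEnd ℂ) x * u ≠ 0 := by
    intro h
    have he : (starRingEnd ℂ) x * u = 1 := by linear_combination -h
    rw [he] at habs_t; simp at habs_t; linarith [habs_t ▸ hx]
  have h2t : (1 : ℂ) + (starRingEnd ℂ) x * u ≠ 0 := by
    intro h
    have he : (starRingEnd ℂ) x * u = -1 := by linear_combination h
    rw [he] at habs_t; simp at habs_t; linarith [habs_t ▸ hx]
  have h3t : (1 : ℂ) + (m : ℂ) * ((starRingEnd ℂ) x * u) ≠ 0 := by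
    intro h
    have h' : ‖(m:ℂ) * ((starRingEnd ℂ) x * u)‖ = 1 := by
      have he : (m:ℂ) * ((starRingEnd ℂ) x * u) = -1 := by linear_combination h
      rw [he]; simp
    rw [norm_mul, habs_t, Complex.norm_real, Real.norm_eq_abs, abs_of_pos hm0] at h'
    nlinarith [norm_nonneg x]
  have huu : u * (starRingEnd ℂ) u = 1 := by
    rw [Complex.mul_conj]; norm_cast; rw [← Complex.sq_norm, hu]; norm_num
  have hgpos : (0:ℝ) < 1 - ‖x‖ ^ 2 := by nlinarith [norm_nonneg x]
  have hg : ‖1 - x * (starRingEnd ℂ) x‖ = 1 - ‖x‖ ^ 2 := by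
    rw [Complex.mul_conj, ← Complex.sq_norm]
    have e : (1 : ℂ) - (((‖x‖ ^ 2 : ℝ)) : ℂ) = (((1 - ‖x‖ ^ 2 : ℝ)) : ℂ) := by
      push_cast; ring
    rw [e, Complex.norm_real, Real.norm_eq_abs, abs_of_pos hgpos]
  set a : ℂ := (x - u) / (1 - (starRingEnd ℂ) x * u) with hadef
  set b : ℂ := (u + x) / (1 + (starRingEnd ℂ) x * u) with hbdef
  have hy' : y = ((m : ℂ) * u + x) / (1 + (m:ℂ) * ((starRingEnd ℂ) x * u)) := by
    rw [eq_div_iff h3t, hy]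
  have ea : a - x = -(u * (1 - x * (starRingEnd ℂ) x)) / (1 - (starRingEnd ℂ) x * u) := by
    rw [hadef, eq_div_iff h1t, sub_mul, div_mul_cancel₀ _ h1t]; ring
  have eb : a - b = -(2 * u * (1 - x * (starRingEnd ℂ) x)) /
      ((1 - (starRingEnd ℂ) x * u) * (1 + (starRingEnd ℂ) x * u)) := by
    rw [hadef, hbdef, div_sub_div _ _ h1t h2t]; congr 1; ring
  have exy : x - y = -((m:ℂ) * u * (1 - x * (starRingEnd ℂ) x)) /
      (1 + (m:ℂ) * ((starRingEnd ℂ) x * u)) := by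
    rw [hy', eq_div_iff h3t, sub_mul, div_mul_cancel₀ _ h3t]; ring
  have eby : b - y = (u * (1 - (m:ℂ)) * (1 - x * (starRingEnd ℂ) x)) /
      ((1 + (starRingEnd ℂ) x * u) * (1 + (m:ℂ) * ((starRingEnd ℂ) x * u))) := by
    rw [hbdef, hy', div_sub_div _ _ h2t h3t]; congr 1; ring
  have hr1 : 0 < ‖1 - (starRingEnd ℂ) x * u‖ := norm_pos_iff.mpr h1t
  have hr2 : 0 < ‖1 + (starRingEnd ℂ) x * u‖ := norm_pos_iff.mpr h2t
  have hr3 : 0 < ‖1 + (m:ℂ) * ((starRingEnd ℂ) x * u)‖ := norm_pos_iff.mpr h3t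
  have aax : ‖a - x‖ =
      (1 - ‖x‖ ^ 2) / ‖1 - (starRingEnd ℂ) x * u‖ := by
    rw [ea, norm_div, norm_neg, norm_mul, hu, one_mul, hg]
  have aab : ‖a - b‖ = 2 * (1 - ‖x‖ ^ 2) /
      (‖1 - (starRingEnd ℂ) x * u‖ * ‖1 + (starRingEnd ℂ) x * u‖) := by
    rw [eb, norm_div, norm_neg, norm_mul, norm_mul, norm_mul, hu, hg, Complex.norm_two,
      mul_one]
  have axy : ‖x - y‖ = m * (1 - ‖x‖ ^ 2) /
      ‖1 + (m:ℂ) * ((starRingEnd ℂ) x * u)‖ := by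
    rw [exy, norm_div, norm_neg, norm_mul, norm_mul, hu, hg, Complex.norm_real, Real.norm_eq_abs,
      abs_of_pos hm0, mul_one]
  have aby : ‖b - y‖ = (1 - m) * (1 - ‖x‖ ^ 2) /
      (‖1 + (starRingEnd ℂ) x * u‖ *
        ‖1 + (m:ℂ) * ((starRingEnd ℂ) x * u)‖) := by
    have e1 : ‖1 - (m:ℂ)‖ = 1 - m := by
      have e : (1 : ℂ) - (m:ℂ) = ((1 - m : ℝ) : ℂ) := by push_cast; ring
      rw [e, Complex.norm_real, Real.norm_eq_abs, abs_of_pos (by linarith)]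
    rw [eby, norm_div, norm_mul, norm_mul, norm_mul, hu, hg, e1, one_mul]
  refine ⟨?_, ?_, ?_⟩
  · have hxu : ‖x - u‖ ≠ 0 := by
      intro h
      have h0 : x - u = 0 := norm_eq_zero.mp h
      have he : u = x := by linear_combination -h0
      rw [← he, hu] at hx; linarith
    have key : ‖1 - (starRingEnd ℂ) x * u‖ = ‖x - u‖ := by
      have e : (1:ℂ) - (starRingEnd ℂ) x * u = u * (starRingEnd ℂ) (u - x) := by
        rw [map_sub, mul_sub, huu]; ring
      rw [e, norm_mul, hu, one_mul, Complex.norm_conj, norm_sub_rev]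
    rw [hadef, norm_div, key, div_self hxu]
  · have hux : ‖u + x‖ ≠ 0 := by
      intro h
      have h0 : u + x = 0 := norm_eq_zero.mp h
      have he : x = -u := by linear_combination h0
      rw [he, norm_neg, hu] at hx; linarith
    have key : ‖1 + (starRingEnd ℂ) x * u‖ = ‖u + x‖ := by
      have e : (1:ℂ) + (starRingEnd ℂ) x * u = u * (starRingEnd ℂ) (u + x) := by
        rw [map_add, mul_add, huu]; ring
      rw [e, norm_mul, hu, one_mul, Complex.norm_conj]
    rw [hbdef, norm_div, key, div_self hux]
  · rw [crossRatio, aab, axy, aax, aby]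
    have hgne : (1 - ‖x‖ ^ 2) ≠ 0 := ne_of_gt hgpos
    have hr1n : ‖1 - (starRingEnd ℂ) x * u‖ ≠ 0 := ne_of_gt hr1
    have hr2n : ‖1 + (starRingEnd ℂ) x * u‖ ≠ 0 := ne_of_gt hr2
    have hr3n : ‖1 + (m:ℂ) * ((starRingEnd ℂ) x * u)‖ ≠ 0 := ne_of_gt hr3
    have hmn : (1:ℝ) - m ≠ 0 := by intro h; linarith
    field_simp
    ring
    exact mul_inv_cancel₀ (by rw [mul_comm (m:ℂ)] at hr3n; exact hr3n)

/-- For `x,y` in the punctured unit disk with `|y| ≤ |x|`,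
`δ_{𝔹²∖{0}}(x,y) = max{ ρ_{𝔹²}(x,y), log(1 + |x-y|/((1-|x|)|y|)) }`. -/
theorem stmt12 (x y : ℂ) (hx : x ∈ Metric.ball (0 : ℂ) 1 \ {0})
    (hy : y ∈ Metric.ball (0 : ℂ) 1 \ {0}) (hle : ‖y‖ ≤ ‖x‖) :
    deltaMetric (Metric.ball (0 : ℂ) 1 \ {0}) x y =
      max (rhoDisk x y)
        (Real.log (1 + ‖x - y‖ / ((1 - ‖x‖) * ‖y‖))) := by
  obtain ⟨hx1, hx0'⟩ := hx
  obtain ⟨hy1, hy0'⟩ := hy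
  rw [Metric.mem_ball, dist_zero_right] at hx1 hy1
  have hx0 : x ≠ 0 := hx0'
  have hy0 : y ≠ 0 := hy0'
  have habsx : 0 < ‖x‖ := norm_pos_iff.mpr hx0
  have habsy : 0 < ‖y‖ := norm_pos_iff.mpr hy0
  set q : ℝ := ‖x - y‖ with hqdef
  set p : ℝ := ‖1 - x * (starRingEnd ℂ) y‖ with hpdef
  have hq0 : 0 ≤ q := norm_nonneg _
  have hqp : q < p := disk_ineq x y hx1 hy1
  have hp0 : 0 < p := lt_of_le_of_lt hq0 hqp
  have hLdenpos : 0 < (1 - ‖x‖) * ‖y‖ := by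
    apply mul_pos (by linarith) habsy
  have hL0 : 0 ≤ Real.log (1 + q / ((1 - ‖x‖) * ‖y‖)) := by
    apply Real.log_nonneg
    have : 0 ≤ q / ((1 - ‖x‖) * ‖y‖) := by positivity
    linarith
  have hrho : rhoDisk x y = Real.log ((p + q) / (p - q)) := by
    rw [rhoDisk, arth, norm_div, ← hqdef, ← hpdef]
    have h1 : (0:ℝ) < 1 - q / p := by
      rw [sub_pos, div_lt_one hp0]; exact hqp
    have h2 : (0:ℝ) < p - q := by linarith
    rw [show (1 + q / p) / (1 - q / p) = (p + q) / (p - q) by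
      rw [div_eq_div_iff (ne_of_gt h1) (ne_of_gt h2)]
      field_simp]
    ring
  have hrho0 : 0 ≤ rhoDisk x y := by
    rw [hrho]
    apply Real.log_nonneg
    rw [le_div_iff₀ (by linarith)]
    linarith
  set M : ℝ := max (rhoDisk x y)
      (Real.log (1 + q / ((1 - ‖x‖) * ‖y‖))) with hMdef
  have hM0 : 0 ≤ M := le_trans hrho0 (le_max_left _ _)
  -- lower bound on |c - x| for c on the unit circle
  have haxge : ∀ c : ℂ, ‖c‖ = 1 → 1 - ‖x‖ ≤ ‖c - x‖ := by
    intro c hc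
    have h := norm_sub_norm_le c x
    rw [hc] at h
    linarith
  have hbyge : ∀ c : ℂ, ‖c‖ = 1 → 1 - ‖y‖ ≤ ‖c - y‖ := by
    intro c hc
    have h := norm_sub_norm_le c y
    rw [hc] at h
    linarith
  -- the key upper bound
  have key : ∀ a ∈ frontier (Metric.ball (0 : ℂ) 1 \ {0}),
      ∀ b ∈ frontier (Metric.ball (0 : ℂ) 1 \ {0}),
      Real.log (1 + crossRatio a x b y) ≤ M := by
    intro a ha b hb
    rcases frontier_mem_char a ha with haC | ha0 <;>
      rcases frontier_mem_char b hb with hbC | hb0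
    · -- both on circle
      by_cases hqz : q = 0
      · have hz : crossRatio a x b y = 0 := by
          rw [crossRatio, ← hqdef, hqz, mul_zero, zero_div]
        rw [hz, add_zero, Real.log_one]; exact hM0
      · have hqpos : 0 < q := lt_of_le_of_ne hq0 (Ne.symm hqz)
        have hax : 0 < ‖a - x‖ := lt_of_lt_of_le (by linarith) (haxge a haC)
        have hby : 0 < ‖b - y‖ := lt_of_lt_of_le (by linarith) (hbyge b hbC)
        have hD : 0 < ‖a - x‖ * ‖b - y‖ := mul_pos hax hby
        have hcirc := circle_ineq a b x y haC hbC
        rw [← hpdef, ← hqdef] at hcirc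
        have hpq : (0:ℝ) < p - q := by linarith
        have h5 : ‖a - b‖ * (p - q) ≤
            2 * (‖a - x‖ * ‖b - y‖) := by nlinarith [hcirc]
        have hCR0 : 0 ≤ crossRatio a x b y := by
          rw [crossRatio]; positivity
        have hCRle : crossRatio a x b y ≤ 2 * q / (p - q) := by
          rw [crossRatio, ← hqdef, div_le_div_iff₀ hD hpq]
          nlinarith [mul_le_mul_of_nonneg_right h5 hq0]
        have hsum : 1 + 2 * q / (p - q) = (p + q) / (p - q) := by
          field_simp
          ring
        have hlog : Real.log (1 + crossRatio a x b y) ≤ Real.log ((p + q) / (p - q)) := by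
          rw [← hsum]
          apply Real.log_le_log (by linarith)
          linarith
        rw [← hrho] at hlog
        exact le_trans hlog (le_max_left _ _)
    · -- a on circle, b = 0
      subst hb0
      have e : crossRatio a x 0 y = q / (‖a - x‖ * ‖y‖) := by
        rw [crossRatio, ← hqdef, sub_zero, zero_sub, norm_neg, haC, one_mul]
      have hax : 0 < ‖a - x‖ := lt_of_lt_of_le (by linarith) (haxge a haC)
      have hbound : crossRatio a x 0 y ≤ q / ((1 - ‖x‖) * ‖y‖) := by
        rw [e]
        gcongr
        exact haxge a haC
      have hCR0 : 0 ≤ crossRatio a x 0 y := by rw [e]; positivity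
      have hlog := Real.log_le_log (by linarith : (0:ℝ) < 1 + crossRatio a x 0 y)
        (by linarith : 1 + crossRatio a x 0 y ≤ 1 + q / ((1 - ‖x‖) * ‖y‖))
      exact le_trans hlog (le_max_right _ _)
    · -- a = 0, b on circle
      subst ha0
      have hby : 0 < ‖b - y‖ := lt_of_lt_of_le (by linarith) (hbyge b hbC)
      have e : crossRatio 0 x b y = q / (‖x‖ * ‖b - y‖) := by
        rw [crossRatio, ← hqdef, zero_sub, zero_sub, norm_neg, norm_neg, hbC,
          one_mul]
      have hchain : (1 - ‖x‖) * ‖y‖ ≤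
          ‖x‖ * ‖b - y‖ := by
        have h1 : (1 - ‖x‖) * ‖y‖ ≤ ‖x‖ * (1 - ‖y‖) := by
          nlinarith [hle]
        have h2 : ‖x‖ * (1 - ‖y‖) ≤ ‖x‖ * ‖b - y‖ :=
          mul_le_mul_of_nonneg_left (hbyge b hbC) habsx.le
        linarith
      have hbound : crossRatio 0 x b y ≤ q / ((1 - ‖x‖) * ‖y‖) := by
        rw [e]
        gcongr
      have hCR0 : 0 ≤ crossRatio 0 x b y := by rw [e]; positivity
      have hlog := Real.log_le_log (by linarith : (0:ℝ) < 1 + crossRatio 0 x b y)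
        (by linarith : 1 + crossRatio 0 x b y ≤ 1 + q / ((1 - ‖x‖) * ‖y‖))
      exact le_trans hlog (le_max_right _ _)
    · -- a = 0, b = 0
      subst ha0; subst hb0
      have hz : crossRatio 0 x 0 y = 0 := by simp [crossRatio]
      rw [hz, add_zero, Real.log_one]; exact hM0
  have hbdd : BddAbove ((fun p : ℂ × ℂ => Real.log (1 + crossRatio p.1 x p.2 y)) ''
      (frontier (Metric.ball (0 : ℂ) 1 \ {0}) ×ˢ frontier (Metric.ball (0 : ℂ) 1 \ {0}))) := by
    refine ⟨M, ?_⟩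
    rintro v ⟨⟨a, b⟩, hab, rfl⟩
    exact key a hab.1 b hab.2
  -- lower bound: the L term is attained
  have hLle : Real.log (1 + q / ((1 - ‖x‖) * ‖y‖)) ≤
      deltaMetric (Metric.ball (0 : ℂ) 1 \ {0}) x y := by
    set a1 : ℂ := x / ((‖x‖ : ℝ) : ℂ) with ha1def
    have hcast : ((‖x‖ : ℝ) : ℂ) ≠ 0 := by
      exact_mod_cast ne_of_gt habsx
    have ha1 : ‖a1‖ = 1 := by
      rw [ha1def, norm_div, Complex.norm_real, Real.norm_eq_abs, abs_of_pos habsx, div_self (ne_of_gt habsx)]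
    have e : a1 - x = (x * (1 - ((‖x‖ : ℝ) : ℂ))) / ((‖x‖ : ℝ) : ℂ) := by
      rw [ha1def]; field_simp
    have e2 : ‖a1 - x‖ = 1 - ‖x‖ := by
      rw [e, norm_div, norm_mul]
      rw [show (1 : ℂ) - ((‖x‖ : ℝ) : ℂ) = (((1 - ‖x‖ : ℝ)) : ℂ) by
        push_cast; ring]
      rw [Complex.norm_real, Real.norm_eq_abs, Complex.norm_real, Real.norm_eq_abs, abs_of_pos habsx,
        abs_of_pos (by linarith : (0:ℝ) < 1 - ‖x‖)]
      field_simp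
    have hval : crossRatio a1 x 0 y = q / ((1 - ‖x‖) * ‖y‖) := by
      rw [crossRatio, ← hqdef, sub_zero, zero_sub, norm_neg, ha1, one_mul, e2]
    have hmem : Real.log (1 + crossRatio a1 x 0 y) ∈
        ((fun p : ℂ × ℂ => Real.log (1 + crossRatio p.1 x p.2 y)) ''
        (frontier (Metric.ball (0 : ℂ) 1 \ {0}) ×ˢ frontier (Metric.ball (0 : ℂ) 1 \ {0}))) :=
      ⟨(a1, 0), ⟨sphere_mem_frontier a1 ha1, zero_mem_frontier⟩, rfl⟩
    have h := le_csSup hbdd hmem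
    rw [hval] at h
    exact h
  -- lower bound: the rho term is attained
  have hRle : rhoDisk x y ≤ deltaMetric (Metric.ball (0 : ℂ) 1 \ {0}) x y := by
    by_cases hxy : x = y
    · subst hxy
      have : rhoDisk x x = 0 := by
        simp [rhoDisk, arth]
      rw [this]
      exact le_trans hL0 hLle
    · have hqpos : 0 < q := by
        rw [hqdef]
        exact norm_pos_iff.mpr (sub_ne_zero.mpr hxy)
      set m : ℝ := q / p with hm
      have hm0 : 0 < m := div_pos hqpos hp0
      have hm1 : m < 1 := (div_lt_one hp0).mpr hqp
      have hconj : ‖1 - (starRingEnd ℂ) x * y‖ = p := by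
        rw [hpdef]
        rw [show (1:ℂ) - (starRingEnd ℂ) x * y =
            (starRingEnd ℂ) (1 - x * (starRingEnd ℂ) y) by
          simp only [map_sub, map_mul, map_one, Complex.conj_conj]]
        rw [Complex.norm_conj]
      have hd : (1:ℂ) - (starRingEnd ℂ) x * y ≠ 0 := by
        intro h
        rw [h] at hconj
        simp at hconj
        linarith [hconj ▸ hp0]
      set u : ℂ := ((p / q : ℝ) : ℂ) * ((y - x) / (1 - (starRingEnd ℂ) x * y)) with hudef
      have hu : ‖u‖ = 1 := by
        rw [hudef, norm_mul, norm_div, Complex.norm_real, Real.norm_eq_abs, hconj, norm_sub_rev, ← hqdef,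
          abs_of_pos (div_pos hp0 hqpos)]
        field_simp
      have hmc : (m:ℝ) * (p / q) = 1 := by
        rw [hm]; field_simp
      have hmu : (m:ℂ) * u = (y - x) / (1 - (starRingEnd ℂ) x * y) := by
        rw [hudef, ← mul_assoc, ← Complex.ofReal_mul, hmc, Complex.ofReal_one, one_mul]
      have hy'' : y * (1 + (m:ℂ) * ((starRingEnd ℂ) x * u)) = (m:ℂ) * u + x := by
        have e : (m:ℂ) * ((starRingEnd ℂ) x * u) = (starRingEnd ℂ) x * ((m:ℂ) * u) := by ring
        rw [e, hmu]
        have hd' : (1:ℂ) - y * (starRingEnd ℂ) x ≠ 0 := by rwa [mul_comm]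
        field_simp
        ring
      obtain ⟨haA, haB, hCR⟩ := mobius_pair x y u m hx1 hu hm0 hm1 hy''
      have hmem : Real.log (1 + crossRatio ((x - u) / (1 - (starRingEnd ℂ) x * u)) x
          ((u + x) / (1 + (starRingEnd ℂ) x * u)) y) ∈
          ((fun p : ℂ × ℂ => Real.log (1 + crossRatio p.1 x p.2 y)) ''
          (frontier (Metric.ball (0 : ℂ) 1 \ {0}) ×ˢ frontier (Metric.ball (0 : ℂ) 1 \ {0}))) :=
        ⟨((x - u) / (1 - (starRingEnd ℂ) x * u), (u + x) / (1 + (starRingEnd ℂ) x * u)),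
          ⟨sphere_mem_frontier _ haA, sphere_mem_frontier _ haB⟩, rfl⟩
      have h := le_csSup hbdd hmem
      rw [hCR] at h
      have hvr : Real.log (1 + 2 * m / (1 - m)) = rhoDisk x y := by
        rw [hrho]
        congr 1
        rw [hm]
        have hpq : (0:ℝ) < p - q := by linarith
        field_simp
        ring
      rw [hvr] at h
      exact h
  rw [deltaMetric]
  apply le_antisymm
  · apply Real.sSup_le _ hM0
    rintro v ⟨⟨a, b⟩, hab, rfl⟩
    exact key a hab.1 b hab.2
  · exact max_le hRle hLle
end

section
/- For all $x,y \in \mathbb{B}^2\setminus\{0\}$: $\frac{1}{2}s_{\mathbb{B}^2\setminus\{0\}}(x,y) \le j^*_{\mathbb{B}^2\setminus\{0\}}(x,y) \le \mathrm{th}\frac{\delta_{\mathbb{B}^2\setminus\{0\}}(x,y)}{2} \le 2 j^*_{\mathbb{B}^2\setminus\{0\}}(x,y) \le 2 s_{\mathbb{B}^2\setminus\{0\}}(x,y)$. -/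
open Real Set

lemma frontier_G : frontier (Metric.ball (0:ℂ) 1 \ {0}) = Metric.sphere (0:ℂ) 1 ∪ {0} := by
  have hG : IsOpen (Metric.ball (0:ℂ) 1 \ {0}) :=
    Metric.isOpen_ball.sdiff isClosed_singleton
  have hball : Metric.ball (0:ℂ) 1 ⊆ closure (Metric.ball (0:ℂ) 1 \ {0}) := by
    intro z hz
    by_cases h0 : z = 0
    · subst h0
      rw [Metric.mem_closure_iff]
      intro ε hε
      refine ⟨(min (ε/2) (1/2) : ℝ), ⟨?_, ?_⟩, ?_⟩
      · simp only [Metric.mem_ball, Complex.dist_eq, sub_zero]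
        rw [Complex.norm_real, Real.norm_eq_abs]
        rw [abs_of_pos (by positivity)]
        have : min (ε/2) (1/2:ℝ) ≤ 1/2 := min_le_right _ _
        linarith
      · simp only [mem_singleton_iff]
        intro h
        have := Complex.ofReal_eq_zero.mp h
        have h1 : (0:ℝ) < min (ε/2) (1/2) := by positivity
        linarith
      · simp only [Complex.dist_eq, zero_sub, norm_neg, Complex.norm_real, Real.norm_eq_abs]
        rw [abs_of_pos (by positivity)]
        have : min (ε/2) (1/2:ℝ) ≤ ε/2 := min_le_left _ _
        linarith
    · exact subset_closure ⟨hz, h0⟩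
  have hcl : closure (Metric.ball (0:ℂ) 1 \ {0}) = Metric.closedBall (0:ℂ) 1 := by
    apply subset_antisymm
    · calc closure (Metric.ball (0:ℂ) 1 \ {0}) ⊆ closure (Metric.ball (0:ℂ) 1) :=
            closure_mono diff_subset
        _ = Metric.closedBall (0:ℂ) 1 := closure_ball _ one_ne_zero
    · rw [← closure_ball (0:ℂ) one_ne_zero]
      exact closure_mono hball |>.trans (by rw [closure_closure])
  rw [frontier, hG.interior_eq, hcl]
  ext z
  simp only [mem_diff, Metric.mem_closedBall, Metric.mem_ball, mem_singleton_iff, mem_union,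
    Metric.mem_sphere, Complex.dist_eq, sub_zero]
  constructor
  · rintro ⟨h1, h2⟩
    by_cases h0 : z = 0
    · exact Or.inr h0
    · left
      rcases lt_or_eq_of_le h1 with h | h
      · exact absurd ⟨h, h0⟩ h2
      · exact h
  · rintro (h | h)
    · exact ⟨h.le, fun ⟨h1, _⟩ => absurd h (ne_of_lt h1)⟩
    · subst h; simp

lemma tanh_half (v : ℝ) : Real.tanh (v/2) = (Real.exp v - 1)/(Real.exp v + 1) := by
  rw [Real.tanh_eq_sinh_div_cosh, Real.sinh_eq, Real.cosh_eq, Real.exp_neg]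
  have h : Real.exp v = Real.exp (v/2) * Real.exp (v/2) := by
    rw [← Real.exp_add]; ring_nf
  have hp : (0:ℝ) < Real.exp (v/2) := Real.exp_pos _
  have hp1 : (0:ℝ) < Real.exp v + 1 := by positivity
  rw [h]
  field_simp

lemma exists_exit (a y : ℂ) (ha : ‖a‖ ≤ 1) (hy : ‖y‖ < 1) (hne : y ≠ a) :
    ∃ b : ℂ, ‖b‖ = 1 ∧ ‖a - b‖ = ‖a - y‖ + ‖y - b‖ := by
  have hya : 0 < ‖y - a‖ := by
    rw [norm_pos_iff]; exact sub_ne_zero.2 hne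
  set f : ℝ → ℝ := fun s => ‖a + s • (y - a)‖ with hf
  have hc : Continuous f :=
    continuous_norm.comp (continuous_const.add ((continuous_id.smul continuous_const)))
  set s₀ : ℝ := (1 + ‖a‖) / ‖y - a‖ with hs₀def
  have hub : ‖y - a‖ < 1 + ‖a‖ := by
    calc ‖y - a‖ ≤ ‖y‖ + ‖a‖ := by
          simpa [sub_eq_add_neg] using norm_add_le y (-a)
      _ < 1 + ‖a‖ := by linarith
  have hs₀ : 1 < s₀ := (one_lt_div hya).2 hub
  have hf1 : f 1 < 1 := by
    simp only [hf, one_smul]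
    simpa using hy
  have hfs₀ : 1 ≤ f s₀ := by
    have habs : ‖s₀ • (y - a)‖ = s₀ * ‖y - a‖ := by
      rw [Complex.real_smul, norm_mul, Complex.norm_real, Real.norm_eq_abs, abs_of_pos (by linarith)]
    have h1 : ‖s₀ • (y - a)‖ ≤ ‖a + s₀ • (y - a)‖ + ‖a‖ := by
      calc ‖s₀ • (y - a)‖ = ‖(a + s₀ • (y - a)) + (-a)‖ := by ring_nf
        _ ≤ ‖a + s₀ • (y - a)‖ + ‖-a‖ := norm_add_le _ _
        _ = ‖a + s₀ • (y - a)‖ + ‖a‖ := by rw [norm_neg]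
    have h2 : s₀ * ‖y - a‖ = 1 + ‖a‖ := by
      rw [hs₀def]; field_simp
    simp only [hf]
    rw [habs, h2] at h1
    linarith
  obtain ⟨s, hs_mem, hfs⟩ := intermediate_value_Icc (le_of_lt hs₀) hc.continuousOn
    (show (1:ℝ) ∈ Icc (f 1) (f s₀) from ⟨hf1.le, hfs₀⟩)
  have hs1 : 1 ≤ s := hs_mem.1
  refine ⟨a + s • (y - a), hfs, ?_⟩
  have e1 : a - (a + s • (y - a)) = -(s • (y - a)) := by ring_nf
  have e2 : y - (a + s • (y - a)) = -((s - 1) • (y - a)) := by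
    rw [sub_smul, one_smul]; ring_nf
  rw [e1, e2, norm_neg, norm_neg]
  have e3 : a - y = -(y - a) := by ring
  rw [e3, norm_neg]
  rw [Complex.real_smul, Complex.real_smul, norm_mul, norm_mul, Complex.norm_real, Real.norm_eq_abs,
    Complex.norm_real, Real.norm_eq_abs, abs_of_pos (by linarith), abs_of_nonneg (by linarith)]
  ring

lemma pair_lower (x y : ℂ) (hx : x ∈ Metric.ball (0 : ℂ) 1 \ {0})
    (hy : y ∈ Metric.ball (0 : ℂ) 1 \ {0})
    (hm : Metric.infDist x (frontier (Metric.ball (0:ℂ) 1 \ {0}))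
        ≤ Metric.infDist y (frontier (Metric.ball (0:ℂ) 1 \ {0}))) :
    ∃ a ∈ frontier (Metric.ball (0:ℂ) 1 \ {0}), ∃ b ∈ frontier (Metric.ball (0:ℂ) 1 \ {0}),
      ‖x - y‖ / Metric.infDist x (frontier (Metric.ball (0:ℂ) 1 \ {0}))
        ≤ crossRatio a x b y := by
  set F := frontier (Metric.ball (0:ℂ) 1 \ {0}) with hF
  have hFc : IsCompact F := by
    rw [hF, frontier_G]; exact (isCompact_sphere _ _).union isCompact_singleton
  have hFne : F.Nonempty := ⟨0, by rw [hF, frontier_G]; exact Or.inr rfl⟩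
  obtain ⟨a, haF, hdist⟩ := hFc.exists_infDist_eq_dist hFne x
  set mx := Metric.infDist x F with hmxdef
  have hxlt : ‖x‖ < 1 := by
    simpa [Complex.dist_eq] using hx.1
  have hylt : ‖y‖ < 1 := by
    simpa [Complex.dist_eq] using hy.1
  have hane : x ≠ a := by
    have haF' := haF
    rw [hF, frontier_G] at haF'
    rcases haF' with h | h
    · have h' : ‖a‖ = 1 := by simpa [Complex.dist_eq] using h
      intro heq
      rw [heq] at hxlt
      linarith
    · intro heq
      exact hx.2 (by rw [heq]; exact h)
  have hmx : 0 < mx := lt_of_lt_of_eq (dist_pos.2 hane) hdist.symm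
  have hya : y ≠ a := by
    intro heq
    rw [heq] at hm
    have h1 : Metric.infDist a F ≤ dist a a := Metric.infDist_le_dist_of_mem haF
    rw [dist_self] at h1
    linarith
  have haabs : ‖a‖ ≤ 1 := by
    have haF' := haF
    rw [hF, frontier_G] at haF'
    rcases haF' with h | h
    · have h' : ‖a‖ = 1 := by simpa [Complex.dist_eq] using h
      exact h'.le
    · simp only [mem_singleton_iff] at h
      rw [h]; simp
  obtain ⟨b, hb1, hbeq⟩ := exists_exit a y haabs hylt hya
  have hbF : b ∈ F := by
    rw [hF, frontier_G]; left
    rw [mem_sphere_iff_norm, sub_zero, hb1]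
  refine ⟨a, haF, b, hbF, ?_⟩
  have hax : ‖a - x‖ = mx := by
    rw [hdist, Complex.dist_eq]
    exact norm_sub_rev a x
  have hby : 0 < ‖b - y‖ := by
    have : ‖b‖ ≤ ‖b - y‖ + ‖y‖ := by
      calc ‖b‖ = ‖(b - y) + y‖ := by ring_nf
        _ ≤ ‖b - y‖ + ‖y‖ := norm_add_le _ _
    rw [hb1] at this; linarith
  have hab : ‖b - y‖ ≤ ‖a - b‖ := by
    rw [hbeq, norm_sub_rev y b]
    linarith [norm_nonneg (a - y)]
  rw [crossRatio, hax]
  rw [div_le_div_iff₀ hmx (by positivity)]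
  have ht : 0 ≤ ‖x - y‖ := norm_nonneg _
  nlinarith [mul_le_mul_of_nonneg_left hab ht, hmx.le]

lemma infDist_pos_G (x : ℂ) (hx : x ∈ Metric.ball (0:ℂ) 1 \ {0}) :
    0 < Metric.infDist x (frontier (Metric.ball (0:ℂ) 1 \ {0})) := by
  have hFc : IsCompact (frontier (Metric.ball (0:ℂ) 1 \ {0})) := by
    rw [frontier_G]; exact (isCompact_sphere _ _).union isCompact_singleton
  have hFne : (frontier (Metric.ball (0:ℂ) 1 \ {0})).Nonempty :=
    ⟨0, by rw [frontier_G]; exact Or.inr rfl⟩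
  obtain ⟨a, haF, hdist⟩ := hFc.exists_infDist_eq_dist hFne x
  have hxlt : ‖x‖ < 1 := by simpa [Complex.dist_eq] using hx.1
  have hane : x ≠ a := by
    rw [frontier_G] at haF
    rcases haF with h | h
    · have h' : ‖a‖ = 1 := by simpa [Complex.dist_eq] using h
      intro heq; rw [heq] at hxlt; linarith
    · intro heq; exact hx.2 (by rw [heq]; exact h)
  exact lt_of_lt_of_eq (dist_pos.2 hane) hdist.symm

set_option maxHeartbeats 2000000 in
/-- The sharp inequality chain
`(1/2)s ≤ j* ≤ th(δ/2) ≤ 2j* ≤ 2s` in the punctured unit disk. -/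
theorem stmt13 (x y : ℂ) (hx : x ∈ Metric.ball (0 : ℂ) 1 \ {0})
    (hy : y ∈ Metric.ball (0 : ℂ) 1 \ {0}) :
    (1 / 2) * sMetric (Metric.ball (0 : ℂ) 1 \ {0}) x y
        ≤ jStar (Metric.ball (0 : ℂ) 1 \ {0}) x y ∧
    jStar (Metric.ball (0 : ℂ) 1 \ {0}) x y
        ≤ Real.tanh (deltaMetric (Metric.ball (0 : ℂ) 1 \ {0}) x y / 2) ∧
    Real.tanh (deltaMetric (Metric.ball (0 : ℂ) 1 \ {0}) x y / 2)
        ≤ 2 * jStar (Metric.ball (0 : ℂ) 1 \ {0}) x y ∧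
    2 * jStar (Metric.ball (0 : ℂ) 1 \ {0}) x y
        ≤ 2 * sMetric (Metric.ball (0 : ℂ) 1 \ {0}) x y := by
  have hmx : 0 < Metric.infDist x (frontier (Metric.ball (0:ℂ) 1 \ {0})) := infDist_pos_G x hx
  have hmy : 0 < Metric.infDist y (frontier (Metric.ball (0:ℂ) 1 \ {0})) := infDist_pos_G y hy
  have hFc : IsCompact (frontier (Metric.ball (0:ℂ) 1 \ {0})) := by
    rw [frontier_G]; exact (isCompact_sphere _ _).union isCompact_singleton
  have hFne : (frontier (Metric.ball (0:ℂ) 1 \ {0})).Nonempty :=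
    ⟨0, by rw [frontier_G]; exact Or.inr rfl⟩
  simp only [sMetric, jStar, deltaMetric]
  set F := frontier (Metric.ball (0:ℂ) 1 \ {0}) with hFdef
  set t := ‖x - y‖ with htdef
  set mx := Metric.infDist x F with hmxdef
  set my := Metric.infDist y F with hmydef
  set m := min mx my with hmdef
  have hm : 0 < m := lt_min hmx hmy
  have ht : 0 ≤ t := norm_nonneg _
  set A := ((fun z => ‖x - z‖ + ‖z - y‖) '' F) with hAdef
  set S := sInf A with hSdef
  have hAne : A.Nonempty := hFne.image _
  have hAbd : BddBelow A := ⟨0, by rintro _ ⟨z, hz, rfl⟩; positivity⟩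
  have hdx : ∀ z ∈ F, m ≤ ‖x - z‖ := by
    intro z hz
    refine le_trans (min_le_left _ _) ?_
    rw [← Complex.dist_eq]
    exact Metric.infDist_le_dist_of_mem hz
  have hdy : ∀ z ∈ F, m ≤ ‖z - y‖ := by
    intro z hz
    refine le_trans (min_le_right _ _) ?_
    rw [norm_sub_rev z y, ← Complex.dist_eq]
    exact Metric.infDist_le_dist_of_mem hz
  have hS2m : 2 * m ≤ S := by
    refine le_csInf hAne ?_
    rintro _ ⟨z, hz, rfl⟩
    dsimp only
    have h1 := hdx z hz; have h2 := hdy z hz; linarith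
  have hSt : t ≤ S := by
    refine le_csInf hAne ?_
    rintro _ ⟨z, hz, rfl⟩
    dsimp only
    calc t = ‖(x - z) + (z - y)‖ := by rw [htdef]; ring_nf
      _ ≤ ‖x - z‖ + ‖z - y‖ := norm_add_le _ _
  have hSpos : 0 < S := lt_of_lt_of_le (by linarith) hS2m
  have hSx : S ≤ t + 2 * mx := by
    obtain ⟨a, haF, hda⟩ := hFc.exists_infDist_eq_dist hFne x
    have h1 : S ≤ ‖x - a‖ + ‖a - y‖ := csInf_le hAbd ⟨a, haF, rfl⟩
    have h2 : ‖x - a‖ = mx := by rw [hmxdef, hda, Complex.dist_eq]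
    have h3 : ‖a - y‖ ≤ mx + t := by
      calc ‖a - y‖ = ‖(a - x) + (x - y)‖ := by ring_nf
        _ ≤ ‖a - x‖ + ‖x - y‖ := norm_add_le _ _
        _ = mx + t := by rw [norm_sub_rev a x, h2]
    linarith
  have hSy : S ≤ t + 2 * my := by
    obtain ⟨b, hbF, hdb⟩ := hFc.exists_infDist_eq_dist hFne y
    have h1 : S ≤ ‖x - b‖ + ‖b - y‖ := csInf_le hAbd ⟨b, hbF, rfl⟩
    have h2 : ‖b - y‖ = my := by
      rw [hmydef, hdb, Complex.dist_eq]; exact norm_sub_rev b y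
    have h3 : ‖x - b‖ ≤ t + my := by
      calc ‖x - b‖ = ‖(x - y) + (y - b)‖ := by ring_nf
        _ ≤ ‖x - y‖ + ‖y - b‖ := norm_add_le _ _
        _ = t + my := by rw [norm_sub_rev y b, h2]
    linarith
  have hSm : S ≤ t + 2 * m := by
    rcases le_total mx my with h | h
    · rw [hmdef, min_eq_left h]; exact hSx
    · rw [hmdef, min_eq_right h]; exact hSy
  -- delta
  set D := ((fun p : ℂ × ℂ => Real.log (1 + crossRatio p.1 x p.2 y)) '' (F ×ˢ F)) with hDdef
  set δ := sSup D with hδdef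
  have hB1 : (1:ℝ) ≤ ((m + t)/m)^2 := by
    have h1 : (1:ℝ) ≤ (m + t)/m := (one_le_div hm).2 (by linarith)
    nlinarith
  have hElem : ∀ p ∈ (F ×ˢ F), Real.log (1 + crossRatio p.1 x p.2 y)
      ≤ Real.log (((m + t)/m)^2) := by
    rintro ⟨a, b⟩ ⟨haF, hbF⟩
    have hp : m ≤ ‖a - x‖ := by
      rw [norm_sub_rev a x]; exact hdx a haF
    have hq : m ≤ ‖b - y‖ := hdy b hbF
    set p := ‖a - x‖
    set q := ‖b - y‖
    have hCn : 0 ≤ crossRatio a x b y := by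
      rw [crossRatio]; positivity
    apply Real.log_le_log (by linarith)
    have htri : ‖a - b‖ ≤ p + t + q := by
      calc ‖a - b‖ = ‖(a - x) + (x - y) + (y - b)‖ := by ring_nf
        _ ≤ ‖(a - x) + (x - y)‖ + ‖y - b‖ := norm_add_le _ _
        _ ≤ ‖a - x‖ + ‖x - y‖ + ‖y - b‖ := by
            linarith [norm_add_le (a - x) (x - y)]
        _ = p + t + q := by rw [norm_sub_rev y b]
    have hpq : m * m ≤ p * q := mul_le_mul hp hq hm.le (le_trans hm.le hp)
    have hC : crossRatio a x b y ≤ (t^2 + 2*t*m)/m^2 := by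
      rw [crossRatio, div_le_div_iff₀ (by nlinarith) (by positivity)]
      have h1 : 0 ≤ t*t*(p*q - m*m) := mul_nonneg (mul_nonneg ht ht) (by linarith)
      have h2 : 0 ≤ t*m*(p*(q-m)) := by
        apply mul_nonneg (mul_nonneg ht hm.le)
        exact mul_nonneg (le_trans hm.le hp) (by linarith)
      have h3 : 0 ≤ t*m*(q*(p-m)) := by
        apply mul_nonneg (mul_nonneg ht hm.le)
        exact mul_nonneg (le_trans hm.le hq) (by linarith)
      have h4 : 0 ≤ ((p + t + q) - ‖a - b‖) * (t * m^2) := by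
        apply mul_nonneg (by linarith) (mul_nonneg ht (sq_nonneg m))
      nlinarith [h1, h2, h3, h4]
    have heq : 1 + (t^2 + 2*t*m)/m^2 = ((m + t)/m)^2 := by
      field_simp; ring
    linarith [hC, heq.le, heq.ge]
  have hDne : D.Nonempty := (hFne.prod hFne).image _
  have hDbdd : BddAbove D := by
    refine ⟨Real.log (((m + t)/m)^2), ?_⟩
    rintro _ ⟨p, hp, rfl⟩
    exact hElem p hp
  have hδub : δ ≤ Real.log (((m + t)/m)^2) := by
    refine Real.sSup_le ?_ (Real.log_nonneg hB1)
    rintro _ ⟨p, hp, rfl⟩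
    exact hElem p hp
  have hδlb : Real.log (1 + t/m) ≤ δ := by
    rcases le_total mx my with h | h
    · obtain ⟨a, haF, b, hbF, hC⟩ := pair_lower x y hx hy h
      have hmem : Real.log (1 + crossRatio a x b y) ∈ D := ⟨(a, b), ⟨haF, hbF⟩, rfl⟩
      have h1 : Real.log (1 + t/m) ≤ Real.log (1 + crossRatio a x b y) := by
        apply Real.log_le_log (by positivity)
        have hmeq : m = mx := by rw [hmdef]; exact min_eq_left h
        rw [hmeq]
        linarith [hC]
      exact le_trans h1 (le_csSup hDbdd hmem)
    · obtain ⟨a, haF, b, hbF, hC⟩ := pair_lower y x hy hx h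
      have hsym : crossRatio a y b x = crossRatio b x a y := by
        rw [crossRatio, crossRatio, norm_sub_rev a b,
          norm_sub_rev y x, norm_sub_rev a y, norm_sub_rev b x]
        ring
      have hmem : Real.log (1 + crossRatio b x a y) ∈ D := ⟨(b, a), ⟨hbF, haF⟩, rfl⟩
      have h1 : Real.log (1 + t/m) ≤ Real.log (1 + crossRatio b x a y) := by
        apply Real.log_le_log (by positivity)
        have hmeq : m = my := by rw [hmdef]; exact min_eq_right h
        have hty : ‖y - x‖ = t := by
          rw [htdef]; exact norm_sub_rev y x
        rw [hmeq, ← hsym]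
        rw [hty] at hC
        linarith [hC]
      exact le_trans h1 (le_csSup hDbdd hmem)
  -- exponential bounds
  set E := Real.exp δ with hEdef
  have hEpos : 0 < E := Real.exp_pos _
  have hE1 : 1 + t/m ≤ E := by
    calc 1 + t/m = Real.exp (Real.log (1 + t/m)) := (Real.exp_log (by positivity)).symm
      _ ≤ E := Real.exp_le_exp.2 hδlb
  have hE2 : E ≤ ((m + t)/m)^2 := by
    calc E ≤ Real.exp (Real.log (((m + t)/m)^2)) := Real.exp_le_exp.2 hδub
      _ = ((m + t)/m)^2 := Real.exp_log (by positivity)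
  have hEsq : m^2 * E ≤ (m + t)^2 := by
    have h1 : ((m + t)/m)^2 = (m + t)^2 / m^2 := by rw [div_pow]
    rw [h1] at hE2
    have := (le_div_iff₀ (by positivity : (0:ℝ) < m^2)).1 hE2
    linarith
  have hEge1 : 1 ≤ E := le_trans (by nlinarith [div_nonneg ht hm.le]) hE1
  have hmtE : m + t ≤ m * E := by
    have h1 : m * (1 + t/m) ≤ m * E := mul_le_mul_of_nonneg_left hE1 hm.le
    have h2 : m * (1 + t/m) = m + t := by field_simp
    linarith
  have htanh : Real.tanh (δ/2) = (E - 1)/(E + 1) := tanh_half δ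
  refine ⟨?_, ?_, ?_, ?_⟩
  · have he : (1/2 : ℝ) * (t / S) = t / (2 * S) := by ring
    rw [he, div_le_div_iff₀ (by linarith) (by linarith)]
    nlinarith [hSt, hS2m, ht]
  · rw [htanh, div_le_div_iff₀ (by linarith) (by linarith)]
    nlinarith [hmtE, ht, hm]
  · rw [htanh]
    have he : (2:ℝ) * (t / (t + 2*m)) = (2*t) / (t + 2*m) := by ring
    rw [he, div_le_div_iff₀ (by linarith) (by linarith)]
    rcases le_total t (2*m) with hc | hc
    · nlinarith [mul_nonneg (sub_nonneg.2 hEsq) (sub_nonneg.2 hc),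
        pow_nonneg ht 3, mul_pos hm hm, sq_nonneg m]
    · nlinarith [mul_nonneg (sub_nonneg.2 hEge1) (sub_nonneg.2 hc), ht]
  · have h1 : t / (t + 2*m) ≤ t / S := by
      rw [div_le_div_iff₀ (by linarith) hSpos]
      exact mul_le_mul_of_nonneg_left hSm ht
    linarith
end

section
/- For a line segment $[u,v]$ contained in a domain $G\subset\mathbb{R}$ with at least two points in $\mathbb{R}\setminus G$, the $\delta_G$-diameter of $[u,v]$ equals $\delta_G(u,v)$, i.e. $\sup_{x,y\in[u,v]}\delta_G(x,y) = \delta_G(u,v)$. -/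
open Real Set

/-- The cross-ratio `|a,x,b,y|` of real numbers. -/
noncomputable def crossRatioR (a x b y : ℝ) : ℝ := (|a - b| * |x - y|) / (|a - x| * |b - y|)

/-- The Möbius metric `δ_G` for `G ⊆ ℝ`. -/
noncomputable def deltaR (G : Set ℝ) (x y : ℝ) : ℝ :=
  sSup ((fun p : ℝ × ℝ => Real.log (1 + crossRatioR p.1 x p.2 y)) '' (frontier G ×ˢ frontier G))

lemma crossRatioR_nonneg (a x b y : ℝ) : 0 ≤ crossRatioR a x b y :=
  div_nonneg (mul_nonneg (abs_nonneg _) (abs_nonneg _)) (mul_nonneg (abs_nonneg _) (abs_nonneg _))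

lemma crossRatioR_symm (a x b y : ℝ) : crossRatioR a x b y = crossRatioR b y a x := by
  unfold crossRatioR
  rw [abs_sub_comm a b, abs_sub_comm x y, mul_comm |a - x| |b - y|]

lemma mono1R {a u v x y : ℝ} (ha : a ∉ Icc u v) (hux : u ≤ x) (hxy : x ≤ y) (hyv : y ≤ v) :
    (y - x) * |a - u| ≤ (y - u) * |a - x| := by
  have ha' : a < u ∨ v < a := by
    rcases lt_or_ge a u with h | h
    · exact Or.inl h
    · exact Or.inr (lt_of_not_ge fun h' => ha ⟨h, h'⟩)
  rcases ha' with h | h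
  · rw [abs_of_neg (by linarith), abs_of_neg (by linarith)]
    nlinarith [mul_nonneg (show (0:ℝ) ≤ y - a by linarith) (show (0:ℝ) ≤ x - u by linarith)]
  · rw [abs_of_pos (by linarith), abs_of_pos (by linarith)]
    nlinarith [mul_nonneg (show (0:ℝ) ≤ a - y by linarith) (show (0:ℝ) ≤ x - u by linarith)]

lemma mono2R {b u v y : ℝ} (hb : b ∉ Icc u v) (huy : u ≤ y) (hyv : y ≤ v) :
    (y - u) * |b - v| ≤ (v - u) * |b - y| := by
  have hb' : b < u ∨ v < b := by
    rcases lt_or_ge b u with h | h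
    · exact Or.inl h
    · exact Or.inr (lt_of_not_ge fun h' => hb ⟨h, h'⟩)
  rcases hb' with h | h
  · rw [abs_of_neg (by linarith), abs_of_neg (by linarith)]
    nlinarith [mul_nonneg (show (0:ℝ) ≤ v - y by linarith) (show (0:ℝ) ≤ u - b by linarith)]
  · rw [abs_of_pos (by linarith), abs_of_pos (by linarith)]
    nlinarith [mul_nonneg (show (0:ℝ) ≤ v - y by linarith) (show (0:ℝ) ≤ b - u by linarith)]

lemma abs_pos_of_notMem {a u v x : ℝ} (ha : a ∉ Icc u v) (hx : x ∈ Icc u v) : 0 < |a - x| :=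
  abs_pos.mpr (sub_ne_zero.mpr fun h => ha (h ▸ hx))

lemma crossRatioR_key {a b u v x y : ℝ} (ha : a ∉ Icc u v) (hb : b ∉ Icc u v)
    (hx : x ∈ Icc u v) (hy : y ∈ Icc u v) (hxy : x ≤ y) :
    crossRatioR a x b y ≤ crossRatioR a u b v := by
  have huv : u ≤ v := le_trans hx.1 hx.2
  have hmu : u ∈ Icc u v := ⟨le_refl u, huv⟩
  have hmv : v ∈ Icc u v := ⟨huv, le_refl v⟩
  have hax := abs_pos_of_notMem ha hx
  have hby := abs_pos_of_notMem hb hy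
  have hau := abs_pos_of_notMem ha hmu
  have hbv := abs_pos_of_notMem hb hmv
  unfold crossRatioR
  rw [div_le_div_iff₀ (by positivity) (by positivity)]
  have hxyabs : |x - y| = y - x := by rw [abs_sub_comm]; exact abs_of_nonneg (by linarith)
  have huvabs : |u - v| = v - u := by rw [abs_sub_comm]; exact abs_of_nonneg (by linarith)
  rw [hxyabs, huvabs]
  have h1 := mono1R ha hx.1 hxy hy.2
  have h2 := mono2R hb hy.1 hy.2
  have hchain : (y - x) * (|a - u| * |b - v|) ≤ (v - u) * (|a - x| * |b - y|) := by
    calc (y - x) * (|a - u| * |b - v|) = ((y - x) * |a - u|) * |b - v| := by ring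
      _ ≤ ((y - u) * |a - x|) * |b - v| := mul_le_mul_of_nonneg_right h1 (abs_nonneg _)
      _ = ((y - u) * |b - v|) * |a - x| := by ring
      _ ≤ ((v - u) * |b - y|) * |a - x| := mul_le_mul_of_nonneg_right h2 (abs_nonneg _)
      _ = (v - u) * (|a - x| * |b - y|) := by ring
  calc |a - b| * (y - x) * (|a - u| * |b - v|)
      = |a - b| * ((y - x) * (|a - u| * |b - v|)) := by ring
    _ ≤ |a - b| * ((v - u) * (|a - x| * |b - y|)) :=
        mul_le_mul_of_nonneg_left hchain (abs_nonneg _)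
    _ = |a - b| * (v - u) * (|a - x| * |b - y|) := by ring

lemma crossRatioR_bound {a b u v ε : ℝ} (hε : 0 < ε) (huv : u ≤ v)
    (hau : ε ≤ |a - u|) (hbv : ε ≤ |b - v|) :
    crossRatioR a u b v ≤ (v - u) * (2 * ε + (v - u)) / (ε * ε) := by
  have hau0 : 0 < |a - u| := lt_of_lt_of_le hε hau
  have hbv0 : 0 < |b - v| := lt_of_lt_of_le hε hbv
  have huvabs : |u - v| = v - u := by rw [abs_sub_comm]; exact abs_of_nonneg (by linarith)
  have hab : |a - b| ≤ |a - u| + (v - u) + |b - v| := by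
    have h1 : |a - b| ≤ |a - u| + |u - b| := abs_sub_le a u b
    have h2 : |u - b| ≤ |u - v| + |v - b| := abs_sub_le u v b
    rw [huvabs] at h2
    rw [abs_sub_comm v b] at h2
    linarith
  unfold crossRatioR
  rw [huvabs, div_le_div_iff₀ (by positivity) (by positivity)]
  have hs : 0 ≤ v - u := by linarith
  have hpq : ε * ε ≤ |a - u| * |b - v| := mul_le_mul hau hbv (le_of_lt hε) (abs_nonneg _)
  have h1 : ε * |a - u| ≤ |b - v| * |a - u| := mul_le_mul_of_nonneg_right hbv (abs_nonneg _)
  have h2 : ε * |b - v| ≤ |a - u| * |b - v| := mul_le_mul_of_nonneg_right hau (abs_nonneg _)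
  have h1' := mul_le_mul_of_nonneg_left h1 (mul_nonneg hs (le_of_lt hε))
  have h2' := mul_le_mul_of_nonneg_left h2 (mul_nonneg hs (le_of_lt hε))
  have h3' := mul_le_mul_of_nonneg_left hpq (mul_nonneg hs hs)
  have h4' := mul_le_mul_of_nonneg_right hab
    (mul_nonneg hs (mul_nonneg (le_of_lt hε) (le_of_lt hε)))
  nlinarith [h1', h2', h3', h4']

/-- For a segment `[u,v]` inside a domain `G ⊆ ℝ` whose complement has at least two
points, the `δ_G`-diameter of `[u,v]` is `δ_G(u,v)`. -/
theorem stmt14 (G : Set ℝ) (hG : IsOpen G) (hconn : IsConnected G)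
    (hcard : Set.Nontrivial Gᶜ) (u v : ℝ) (huv : u ≤ v) (hsub : Set.Icc u v ⊆ G) :
    sSup ((fun p : ℝ × ℝ => deltaR G p.1 p.2) '' (Set.Icc u v ×ˢ Set.Icc u v))
      = deltaR G u v := by
  have hfrG : ∀ a ∈ frontier G, a ∉ G := by
    intro a haF
    rw [hG.frontier_eq] at haF
    exact haF.2
  have hfr : ∀ a ∈ frontier G, a ∉ Icc u v := fun a haF hmem => hfrG a haF (hsub hmem)
  obtain ⟨ε, hε, hth⟩ := isCompact_Icc.exists_cthickening_subset_open hG hsub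
  have hdist : ∀ a ∈ frontier G, ∀ t ∈ Icc u v, ε ≤ |a - t| := by
    intro a haF t ht
    by_contra h
    push_neg at h
    exact hfrG a haF (hth (Metric.mem_cthickening_of_dist_le a t ε _ ht
      (by rw [Real.dist_eq]; linarith)))
  set C := (v - u) * (2 * ε + (v - u)) / (ε * ε) with hC
  have hvu : (0:ℝ) ≤ v - u := by linarith
  have hC0 : 0 ≤ C := by positivity
  have hmu : u ∈ Icc u v := ⟨le_refl u, huv⟩
  have hmv : v ∈ Icc u v := ⟨huv, le_refl v⟩
  have hcrb : ∀ a ∈ frontier G, ∀ b ∈ frontier G, crossRatioR a u b v ≤ C := by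
    intro a haF b hbF
    exact crossRatioR_bound hε huv (hdist a haF u hmu) (hdist b hbF v hmv)
  have hbdd : BddAbove ((fun p : ℝ × ℝ =>
      Real.log (1 + crossRatioR p.1 u p.2 v)) '' (frontier G ×ˢ frontier G)) := by
    refine ⟨Real.log (1 + C), ?_⟩
    rintro z ⟨⟨a, b⟩, ⟨haF, hbF⟩, rfl⟩
    exact Real.log_le_log (by linarith [crossRatioR_nonneg a u b v])
      (by linarith [hcrb a haF b hbF])
  have hD0 : 0 ≤ deltaR G u v := by
    apply Real.sSup_nonneg
    rintro z ⟨⟨a, b⟩, _, rfl⟩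
    exact Real.log_nonneg (by linarith [crossRatioR_nonneg a u b v])
  have hle : ∀ x ∈ Icc u v, ∀ y ∈ Icc u v, deltaR G x y ≤ deltaR G u v := by
    intro x hx y hy
    apply Real.sSup_le _ hD0
    rintro z ⟨⟨a, b⟩, ⟨haF, hbF⟩, rfl⟩
    rcases le_total x y with hxy | hxy
    · have hk := crossRatioR_key (hfr a haF) (hfr b hbF) hx hy hxy
      calc Real.log (1 + crossRatioR a x b y)
          ≤ Real.log (1 + crossRatioR a u b v) :=
            Real.log_le_log (by linarith [crossRatioR_nonneg a x b y]) (by linarith)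
        _ ≤ deltaR G u v := le_csSup hbdd ⟨(a, b), ⟨haF, hbF⟩, rfl⟩
    · have hsymm : crossRatioR a x b y = crossRatioR b y a x := crossRatioR_symm a x b y
      have hk := crossRatioR_key (hfr b hbF) (hfr a haF) hy hx hxy
      calc Real.log (1 + crossRatioR a x b y)
          ≤ Real.log (1 + crossRatioR b u a v) := by
            rw [hsymm]
            exact Real.log_le_log (by linarith [crossRatioR_nonneg b y a x]) (by linarith)
        _ ≤ deltaR G u v := le_csSup hbdd ⟨(b, a), ⟨hbF, haF⟩, rfl⟩
  apply le_antisymm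
  · apply Real.sSup_le _ hD0
    rintro z ⟨⟨x, y⟩, ⟨hx, hy⟩, rfl⟩
    exact hle x hx y hy
  · apply le_csSup
    · refine ⟨deltaR G u v, ?_⟩
      rintro z ⟨⟨x, y⟩, ⟨hx, hy⟩, rfl⟩
      exact hle x hx y hy
    · exact ⟨(u, v), ⟨hmu, hmv⟩, rfl⟩
end
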